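/- arXiv:0901.1625 — 4 statements merged into one kernel-verified Lean document; each statement's English description precedes it below -/
import Mathlib

section
/- Let f ∈ F_q^0 and R ⊆ V. Then the mean ⟨f(σ)^R⟩ taken with respect to the Potts measure π is a real number and satisfies ⟨f(σ)^R⟩ ≥ 0. -/
open Finset

noncomputable section

variable {V : Type*} [Fintype V] [DecidableEq V]

/-- Kronecker delta `δ_{σ_x,σ_y}` for an unordered edge. -/
def edgeDelta {q : ℕ} (σ : V → Fin q) : Sym2 V → ℝ :=
  Sym2.lift ⟨fun x y => if σ x = σ y then 1 else 0,
    fun x y => by simp [eq_comm]⟩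

/-- Boltzmann weight of a spin configuration for the `q`-state Potts model with
couplings `J` on the edge set `E` and external field `h`. -/
def pottsWeight (q : ℕ) [NeZero q] (E : Finset (Sym2 V)) (J : Sym2 V → ℝ)
    (h : V → ℝ) (σ : V → Fin q) : ℝ :=
  Real.exp ((∑ e ∈ E, J e * edgeDelta σ e) +
    ∑ v : V, h v * (if σ v = 0 then 1 else 0))

/-- The partition function `Z`. -/
def pottsZ (q : ℕ) [NeZero q] (E : Finset (Sym2 V)) (J : Sym2 V → ℝ) (h : V → ℝ) : ℝ :=
  ∑ σ : V → Fin q, pottsWeight q E J h σ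

/-- The Potts probability measure `π`. -/
def pottsPMF (q : ℕ) [NeZero q] (E : Finset (Sym2 V)) (J : Sym2 V → ℝ) (h : V → ℝ)
    (σ : V → Fin q) : ℝ :=
  pottsWeight q E J h σ / pottsZ q E J h

/-- The mean `⟨f(σ)^R⟩ = Σ_σ π(σ) Π_{v ∈ R} f(σ_v)`. -/
def pottsMean (q : ℕ) [NeZero q] (E : Finset (Sym2 V)) (J : Sym2 V → ℝ) (h : V → ℝ)
    (f : Fin q → ℂ) (R : Finset V) : ℂ :=
  ∑ σ : V → Fin q, (pottsPMF q E J h σ : ℂ) * ∏ v ∈ R, f (σ v)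

/-- The mean `⟨f₀(σ)^R f₁(σ)^S⟩`. -/
def pottsMean2 (q : ℕ) [NeZero q] (E : Finset (Sym2 V)) (J : Sym2 V → ℝ) (h : V → ℝ)
    (f₀ f₁ : Fin q → ℂ) (R S : Finset V) : ℂ :=
  ∑ σ : V → Fin q, (pottsPMF q E J h σ : ℂ) *
    ((∏ v ∈ R, f₀ (σ v)) * ∏ v ∈ S, f₁ (σ v))

/-- `E(f(X)^m)` where `X` is uniformly distributed on `Fin q`. -/
def powerMean (q : ℕ) (f : Fin q → ℂ) (m : ℕ) : ℂ :=
  (∑ x : Fin q, f x ^ m) / q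

/-- The class `F_q`: all `f : Fin q → ℂ` such that every `E(f(X)^m)` is real and
nonnegative and `E(f(X)^{m+n}) ≥ E(f(X)^m)·E(f(X)^n)`. -/
def memF (q : ℕ) (f : Fin q → ℂ) : Prop :=
  (∀ m : ℕ, (powerMean q f m).im = 0 ∧ 0 ≤ (powerMean q f m).re) ∧
  ∀ m n : ℕ, (powerMean q f m).re * (powerMean q f n).re ≤ (powerMean q f (m + n)).re

/-- The class `F_q^0`: members of `F_q` with `f(0) = max{|f(x)| : x ∈ Q}`. -/
def memF0 (q : ℕ) [NeZero q] (f : Fin q → ℂ) : Prop :=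
  memF q f ∧ f 0 = (‖f 0‖ : ℂ) ∧
    ∀ x : Fin q, ‖f x‖ ≤ ‖f 0‖


/-! ### Auxiliary machinery -/

noncomputable instance auxCCFintype (G : SimpleGraph V) : Fintype G.ConnectedComponent :=
  Fintype.ofFinite _

noncomputable instance auxCCDecEq (G : SimpleGraph V) : DecidableEq G.ConnectedComponent :=
  Classical.decEq _

/-- Nonnegative real complex numbers. -/
def IsNNReal (z : ℂ) : Prop := ∃ r : ℝ, 0 ≤ r ∧ z = r

lemma IsNNReal.iff' {z : ℂ} (h : IsNNReal z) : z.im = 0 ∧ 0 ≤ z.re := by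
  obtain ⟨r, hr, rfl⟩ := h; simp [hr]

lemma isNNReal_ofReal {r : ℝ} (hr : 0 ≤ r) : IsNNReal (r : ℂ) := ⟨r, hr, rfl⟩

lemma IsNNReal.mul {z w : ℂ} (hz : IsNNReal z) (hw : IsNNReal w) : IsNNReal (z * w) := by
  obtain ⟨r, hr, rfl⟩ := hz; obtain ⟨s, hs, rfl⟩ := hw
  exact ⟨r * s, mul_nonneg hr hs, by push_cast; ring⟩

lemma IsNNReal.sum {ι : Type*} {s : Finset ι} {g : ι → ℂ} (h : ∀ i ∈ s, IsNNReal (g i)) :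
    IsNNReal (∑ i ∈ s, g i) := by
  classical
  induction s using Finset.induction with
  | empty => exact ⟨0, le_refl _, by simp⟩
  | @insert a s hx ih =>
    rw [Finset.sum_insert hx]
    obtain ⟨r, hr, hr'⟩ := h a (mem_insert_self a s)
    obtain ⟨t, ht, ht'⟩ := ih fun i hi => h i (mem_insert_of_mem hi)
    exact ⟨r + t, by positivity, by rw [hr', ht']; push_cast; ring⟩

lemma IsNNReal.prod {ι : Type*} {s : Finset ι} {g : ι → ℂ} (h : ∀ i ∈ s, IsNNReal (g i)) :
    IsNNReal (∏ i ∈ s, g i) := by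
  classical
  induction s using Finset.induction with
  | empty => exact ⟨1, zero_le_one, by simp⟩
  | @insert a s hx ih =>
    rw [Finset.prod_insert hx]
    exact (h a (mem_insert_self a s)).mul (ih fun i hi => h i (mem_insert_of_mem hi))

lemma edgeDelta_cases {q : ℕ} (σ : V → Fin q) (e : Sym2 V) :
    edgeDelta σ e = 0 ∨ edgeDelta σ e = 1 := by
  induction e using Sym2.ind with
  | _ x y =>
    simp only [edgeDelta, Sym2.lift_mk]
    split <;> simp

lemma edgeDelta_eq_one {q : ℕ} {σ : V → Fin q} {x y : V} (h : σ x = σ y) :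
    edgeDelta σ s(x, y) = 1 := by
  simp [edgeDelta, h]

/-- Sum of `f x ^ b` over one cluster, possibly forced to `0`, is a nonneg real. -/
lemma cluster_sum_nn {q : ℕ} [NeZero q] {f : Fin q → ℂ} (hf : memF0 q f) (a b : ℕ) :
    IsNNReal (∑ x : Fin q, (if x = 0 then (1 : ℂ) else 0) ^ a * f x ^ b) := by
  rcases Nat.eq_zero_or_pos a with rfl | ha
  · simp only [pow_zero, one_mul]
    have hq : (q : ℂ) ≠ 0 := Nat.cast_ne_zero.2 (NeZero.ne q)
    have h1 := hf.1.1 b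
    have h2 : (∑ x : Fin q, f x ^ b) = (q : ℂ) * powerMean q f b := by
      rw [powerMean, mul_div_cancel₀ _ hq]
    rw [h2]
    refine (isNNReal_ofReal (Nat.cast_nonneg q)).mul ⟨(powerMean q f b).re, h1.2, ?_⟩
    exact (Complex.ext (by simp) (by simp [h1.1])).symm
  · have : ∀ x : Fin q, (if x = 0 then (1 : ℂ) else 0) ^ a * f x ^ b
        = if x = 0 then f x ^ b else 0 := by
      intro x; split <;> simp [zero_pow ha.ne']
    simp only [this, Finset.sum_ite_eq' Finset.univ (0 : Fin q) (fun x => f x ^ b),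
      Finset.mem_univ, if_true]
    rw [hf.2.1]
    exact ⟨‖f 0‖ ^ b, pow_nonneg (norm_nonneg _) b, by push_cast; ring⟩

/-- Collapsing the sum over configurations compatible with the edges of `A`
to a sum over colourings of the connected components. -/
lemma sum_edge_factor {q : ℕ} [NeZero q] (A : Finset (Sym2 V)) (g : (V → Fin q) → ℂ) :
    ∑ σ : V → Fin q, (∏ e ∈ A, ((edgeDelta σ e : ℝ) : ℂ)) * g σ
      = ∑ τ : (SimpleGraph.fromEdgeSet (↑A : Set (Sym2 V))).ConnectedComponent → Fin q,
          g (fun v => τ ((SimpleGraph.fromEdgeSet (↑A : Set (Sym2 V))).connectedComponentMk v)) := by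
  classical
  set G := SimpleGraph.fromEdgeSet (↑A : Set (Sym2 V)) with hG
  -- the compatibility predicate
  set Ok : (V → Fin q) → Prop := fun σ => ∀ x y : V, s(x, y) ∈ A → σ x = σ y with hOk
  have hprod : ∀ σ : V → Fin q,
      (∏ e ∈ A, ((edgeDelta σ e : ℝ) : ℂ)) = if Ok σ then 1 else 0 := by
    intro σ
    by_cases hσ : Ok σ
    · rw [if_pos hσ]
      refine Finset.prod_eq_one fun e he => ?_
      induction e using Sym2.ind with
      | _ x y => rw [edgeDelta_eq_one (hσ x y he)]; norm_num
    · rw [if_neg hσ]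
      rw [hOk] at hσ
      have hσ' : ∃ x y, s(x, y) ∈ A ∧ σ x ≠ σ y := by
        by_contra hc
        push_neg at hc
        exact hσ fun x y hxy => hc x y hxy
      obtain ⟨x, y, hxy, hne⟩ := hσ'
      refine Finset.prod_eq_zero hxy ?_
      simp [edgeDelta, hne]
  calc ∑ σ : V → Fin q, (∏ e ∈ A, ((edgeDelta σ e : ℝ) : ℂ)) * g σ
      = ∑ σ ∈ Finset.univ.filter Ok, g σ := by
        simp only [hprod, Finset.sum_filter, ite_mul, one_mul, zero_mul]
    _ = _ := by
        refine (Finset.sum_bij (fun τ _ => fun v => τ (G.connectedComponentMk v)) ?_ ?_ ?_ ?_).symm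
        · intro τ _
          refine Finset.mem_filter.2 ⟨Finset.mem_univ _, fun x y hxy => ?_⟩
          by_cases hne : x = y
          · rw [hne]
          · have hadj : G.Adj x y := by
              rw [hG, SimpleGraph.fromEdgeSet_adj]
              exact ⟨by exact_mod_cast hxy, hne⟩
            have : G.connectedComponentMk x = G.connectedComponentMk y :=
              SimpleGraph.ConnectedComponent.eq.2 hadj.reachable
            simp [this]
        · intro τ₁ _ τ₂ _ hτ
          funext c
          induction c using SimpleGraph.ConnectedComponent.ind with
          | _ v => exact congrFun hτ v
        · intro σ hσ
          have hOkσ : Ok σ := (Finset.mem_filter.1 hσ).2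
          have hwalk : ∀ (v w : V), G.Reachable v w → σ v = σ w := by
            intro v w hr
            obtain ⟨p⟩ := hr
            induction p with
            | nil => rfl
            | cons hadj p ih =>
              rename_i u x w'
              have h1 : σ u = σ x := by
                rw [hG, SimpleGraph.fromEdgeSet_adj] at hadj
                exact hOkσ u x (by exact_mod_cast hadj.1)
              rw [h1]; exact ih
          refine ⟨SimpleGraph.ConnectedComponent.lift σ
            (fun v w p _ => hwalk v w ⟨p⟩), Finset.mem_univ _, ?_⟩
          funext v
          rfl
        · intro τ _
          rfl

/-- The key positivity: the unnormalised constrained sum is a nonneg real. -/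
lemma T_nn {q : ℕ} [NeZero q] {f : Fin q → ℂ} (hf : memF0 q f)
    (A : Finset (Sym2 V)) (W R : Finset V) :
    IsNNReal (∑ σ : V → Fin q, (∏ e ∈ A, ((edgeDelta σ e : ℝ) : ℂ)) *
      ((∏ v ∈ W, if σ v = 0 then (1 : ℂ) else 0) * ∏ v ∈ R, f (σ v))) := by
  classical
  set G := SimpleGraph.fromEdgeSet (↑A : Set (Sym2 V)) with hG
  rw [sum_edge_factor A (fun σ => (∏ v ∈ W, if σ v = 0 then (1 : ℂ) else 0) * ∏ v ∈ R, f (σ v))]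
  set mk : V → G.ConnectedComponent := G.connectedComponentMk with hmk
  have key : ∀ τ : G.ConnectedComponent → Fin q,
      ((∏ v ∈ W, if τ (mk v) = 0 then (1 : ℂ) else 0) * ∏ v ∈ R, f (τ (mk v)))
        = ∏ c : G.ConnectedComponent,
            ((if τ c = 0 then (1 : ℂ) else 0) ^ (W.filter (fun v => mk v = c)).card
              * f (τ c) ^ (R.filter (fun v => mk v = c)).card) := by
    intro τ
    rw [Finset.prod_mul_distrib]
    congr 1
    · rw [← Finset.prod_fiberwise W mk (fun v => if τ (mk v) = 0 then (1 : ℂ) else 0)]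
      refine Finset.prod_congr rfl fun c _ => ?_
      rw [Finset.prod_congr rfl (fun v hv => ?_), Finset.prod_const]
      rw [(Finset.mem_filter.1 hv).2]
    · rw [← Finset.prod_fiberwise R mk (fun v => f (τ (mk v)))]
      refine Finset.prod_congr rfl fun c _ => ?_
      rw [Finset.prod_congr rfl (fun v hv => ?_), Finset.prod_const]
      rw [(Finset.mem_filter.1 hv).2]
  simp only [key]
  have hps := Finset.prod_univ_sum (fun _ : G.ConnectedComponent => (Finset.univ : Finset (Fin q)))
    (fun c x => (if x = 0 then (1 : ℂ) else 0) ^ (W.filter (fun v => mk v = c)).card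
      * f x ^ (R.filter (fun v => mk v = c)).card)
  rw [show (Fintype.piFinset fun _ : G.ConnectedComponent => (Finset.univ : Finset (Fin q)))
      = Finset.univ from Fintype.piFinset_univ] at hps
  rw [← hps]
  exact IsNNReal.prod fun c _ => cluster_sum_nn hf _ _

/-- For `f ∈ F_q^0` and `R ⊆ V`, the Potts mean `⟨f(σ)^R⟩` is a real number
and satisfies `⟨f(σ)^R⟩ ≥ 0`. -/
theorem pottsMean_real_nonneg
    (q : ℕ) [NeZero q] (hq : 2 ≤ q)
    (E : Finset (Sym2 V)) (hE : ∀ e ∈ E, ¬ e.IsDiag)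
    (J : Sym2 V → ℝ) (hJ : ∀ e ∈ E, 0 ≤ J e)
    (h : V → ℝ) (hh : ∀ v : V, 0 ≤ h v)
    (f : Fin q → ℂ) (hf : memF0 q f) (R : Finset V) :
    (pottsMean q E J h f R).im = 0 ∧ 0 ≤ (pottsMean q E J h f R).re := by
  classical
  set c : Sym2 V → ℝ := fun e => Real.exp (J e) - 1 with hc
  set d : V → ℝ := fun v => Real.exp (h v) - 1 with hd
  have hNe : Nonempty (Fin q) := ⟨⟨0, Nat.pos_of_ne_zero (NeZero.ne q)⟩⟩
  have hZ : 0 < pottsZ q E J h :=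
    Finset.sum_pos (fun σ _ => Real.exp_pos _) Finset.univ_nonempty
  -- expansion of the Boltzmann weight
  have hw : ∀ σ : V → Fin q, ((pottsWeight q E J h σ : ℝ) : ℂ) =
      ∑ A ∈ E.powerset, ∑ W ∈ (Finset.univ : Finset V).powerset,
        ((∏ e ∈ A, c e : ℝ) : ℂ) * ((∏ v ∈ W, d v : ℝ) : ℂ) *
          ((∏ e ∈ A, ((edgeDelta σ e : ℝ) : ℂ)) *
            (∏ v ∈ W, if σ v = 0 then (1 : ℂ) else 0)) := by
    intro σ
    have h1 : ∀ e : Sym2 V, Complex.exp ((J e : ℂ) * ((edgeDelta σ e : ℝ) : ℂ))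
        = (c e : ℂ) * ((edgeDelta σ e : ℝ) : ℂ) + 1 := by
      intro e
      rcases edgeDelta_cases σ e with h0 | h0 <;> rw [h0] <;> simp only [hc] <;>
        push_cast <;> simp [Complex.exp_add]
    have h2 : ∀ v : V, Complex.exp ((h v : ℂ) * (if σ v = 0 then (1 : ℂ) else 0))
        = (d v : ℂ) * (if σ v = 0 then (1 : ℂ) else 0) + 1 := by
      intro v
      by_cases h0 : σ v = 0 <;> simp only [h0, if_true, if_pos, if_neg, hd] <;>
        push_cast <;> simp
    have step1 : ((pottsWeight q E J h σ : ℝ) : ℂ) =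
        (∏ e ∈ E, Complex.exp ((J e : ℂ) * ((edgeDelta σ e : ℝ) : ℂ))) *
          ∏ v : V, Complex.exp ((h v : ℂ) * (if σ v = 0 then (1 : ℂ) else 0)) := by
      rw [pottsWeight, Complex.ofReal_exp]
      push_cast
      rw [Complex.exp_add, Complex.exp_sum, Complex.exp_sum]
      congr 1
      refine Finset.prod_congr rfl fun v _ => ?_
      by_cases h0 : σ v = 0 <;> simp [h0]
    rw [step1]
    simp only [h1, h2]
    rw [Finset.prod_add (fun e => (c e : ℂ) * ((edgeDelta σ e : ℝ) : ℂ)) (fun _ => (1 : ℂ)) E,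
      Finset.prod_add (fun v => (d v : ℂ) * (if σ v = 0 then (1 : ℂ) else 0))
        (fun _ => (1 : ℂ)) Finset.univ]
    simp only [Finset.prod_const_one, mul_one]
    rw [Finset.sum_mul_sum]
    refine Finset.sum_congr rfl fun A _ => Finset.sum_congr rfl fun W _ => ?_
    rw [Finset.prod_mul_distrib, Finset.prod_mul_distrib]
    push_cast
    ring
  -- the mean as a normalised sum
  have hmean : pottsMean q E J h f R = (((pottsZ q E J h)⁻¹ : ℝ) : ℂ) *
      ∑ σ : V → Fin q, ((pottsWeight q E J h σ : ℝ) : ℂ) * ∏ v ∈ R, f (σ v) := by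
    rw [pottsMean, Finset.mul_sum]
    refine Finset.sum_congr rfl fun σ _ => ?_
    rw [pottsPMF]
    push_cast
    ring
  have key : IsNNReal (pottsMean q E J h f R) := by
    rw [hmean]
    refine (isNNReal_ofReal (inv_nonneg.2 hZ.le)).mul ?_
    have expand : (∑ σ : V → Fin q, ((pottsWeight q E J h σ : ℝ) : ℂ) * ∏ v ∈ R, f (σ v))
        = ∑ A ∈ E.powerset, ∑ W ∈ (Finset.univ : Finset V).powerset,
            (((∏ e ∈ A, c e) * ∏ v ∈ W, d v : ℝ) : ℂ) *
              ∑ σ : V → Fin q, (∏ e ∈ A, ((edgeDelta σ e : ℝ) : ℂ)) *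
                ((∏ v ∈ W, if σ v = 0 then (1 : ℂ) else 0) * ∏ v ∈ R, f (σ v)) := by
      calc (∑ σ : V → Fin q, ((pottsWeight q E J h σ : ℝ) : ℂ) * ∏ v ∈ R, f (σ v))
          = ∑ σ : V → Fin q, ∑ A ∈ E.powerset, ∑ W ∈ (Finset.univ : Finset V).powerset,
              ((∏ e ∈ A, c e : ℝ) : ℂ) * ((∏ v ∈ W, d v : ℝ) : ℂ) *
                ((∏ e ∈ A, ((edgeDelta σ e : ℝ) : ℂ)) *
                  (∏ v ∈ W, if σ v = 0 then (1 : ℂ) else 0)) * ∏ v ∈ R, f (σ v) := by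
            refine Finset.sum_congr rfl fun σ _ => ?_
            rw [hw σ, Finset.sum_mul]
            exact Finset.sum_congr rfl fun A _ => Finset.sum_mul _ _ _
        _ = ∑ A ∈ E.powerset, ∑ σ : V → Fin q, ∑ W ∈ (Finset.univ : Finset V).powerset,
              ((∏ e ∈ A, c e : ℝ) : ℂ) * ((∏ v ∈ W, d v : ℝ) : ℂ) *
                ((∏ e ∈ A, ((edgeDelta σ e : ℝ) : ℂ)) *
                  (∏ v ∈ W, if σ v = 0 then (1 : ℂ) else 0)) * ∏ v ∈ R, f (σ v) :=
            Finset.sum_comm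
        _ = ∑ A ∈ E.powerset, ∑ W ∈ (Finset.univ : Finset V).powerset, ∑ σ : V → Fin q,
              ((∏ e ∈ A, c e : ℝ) : ℂ) * ((∏ v ∈ W, d v : ℝ) : ℂ) *
                ((∏ e ∈ A, ((edgeDelta σ e : ℝ) : ℂ)) *
                  (∏ v ∈ W, if σ v = 0 then (1 : ℂ) else 0)) * ∏ v ∈ R, f (σ v) :=
            Finset.sum_congr rfl fun A _ => Finset.sum_comm
        _ = _ := by
            refine Finset.sum_congr rfl fun A _ => Finset.sum_congr rfl fun W _ => ?_
            rw [Finset.mul_sum]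
            refine Finset.sum_congr rfl fun σ _ => ?_
            push_cast
            ring
    rw [expand]
    refine IsNNReal.sum fun A hA => IsNNReal.sum fun W hW => ?_
    have hsub : A ⊆ E := Finset.mem_powerset.1 hA
    have h1 : 0 ≤ ∏ e ∈ A, c e :=
      Finset.prod_nonneg fun e he => sub_nonneg.2 (Real.one_le_exp (hJ e (hsub he)))
    have h2 : 0 ≤ ∏ v ∈ W, d v :=
      Finset.prod_nonneg fun v _ => sub_nonneg.2 (Real.one_le_exp (hh v))
    exact (isNNReal_ofReal (mul_nonneg h1 h2)).mul (T_nn hf A W R)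
  exact key.iff'
end
end

section
/- Let f ∈ F_q^0 and R ⊆ V. Then the (real-valued) mean ⟨f(σ)^R⟩ is non-decreasing in the coupling vectors J and h: if J_e ≤ J'_e for every e ∈ E and h_v ≤ h'_v for every v ∈ V, then ⟨f(σ)^R⟩ computed with the Potts measure with parameters (J,h) is at most ⟨f(σ)^R⟩ computed with the Potts measure with parameters (J',h'). -/
open Finset

noncomputable section

variable {V : Type*} [Fintype V] [DecidableEq V]

namespace PottsAux

open SimpleGraph

variable {q : ℕ} [NeZero q]

/-- The graph on `V` with edge set `A`. -/
def gA (A : Finset (Sym2 V)) : SimpleGraph V := SimpleGraph.fromEdgeSet ↑A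

abbrev Comp (A : Finset (Sym2 V)) : Type _ := (gA (V := V) A).ConnectedComponent

noncomputable instance (A : Finset (Sym2 V)) : Fintype (Comp A) := Fintype.ofFinite _

/-- Component of a vertex. -/
def ck (A : Finset (Sym2 V)) (v : V) : Comp A := (gA A).connectedComponentMk v

open scoped Classical in
/-- number of points of `R` in component `K`. -/
noncomputable def mC (A : Finset (Sym2 V)) (R : Finset V) (K : Comp A) : ℕ :=
  #(R.filter fun v => ck A v = K)

/-- `σ` respects the edge constraints of `A`. -/
def Resp (A : Finset (Sym2 V)) (σ : V → Fin q) : Prop :=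
  ∀ x y : V, s(x, y) ∈ A → σ x = σ y

lemma edgeDelta_mk (σ : V → Fin q) (x y : V) :
    edgeDelta σ s(x, y) = if σ x = σ y then 1 else 0 := rfl

open scoped Classical in
lemma prod_edgeDelta (A : Finset (Sym2 V)) (σ : V → Fin q) :
    (∏ e ∈ A, edgeDelta σ e) = if Resp A σ then 1 else 0 := by
  have h1 : ∀ e : Sym2 V, edgeDelta σ e
      = if (∀ x y : V, e = s(x, y) → σ x = σ y) then 1 else 0 := by
    intro e
    induction e using Sym2.ind with
    | _ a b =>
      rw [edgeDelta_mk]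
      by_cases hab : σ a = σ b
      · rw [if_pos hab, if_pos]
        intro x y hxy
        rcases Sym2.eq_iff.mp hxy with ⟨rfl, rfl⟩ | ⟨rfl, rfl⟩
        · exact hab
        · exact hab.symm
      · rw [if_neg hab, if_neg]
        intro hco
        exact hab (hco a b rfl)
  simp_rw [h1]
  rw [Finset.prod_boole]
  have hiff : (∀ e ∈ A, ∀ x y : V, e = s(x, y) → σ x = σ y) ↔ Resp A σ := by
    constructor
    · intro hc x y hxy
      exact hc _ hxy x y rfl
    · rintro hr e he x y rfl
      exact hr x y he
  by_cases hc : Resp A σ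
  · rw [if_pos (hiff.mpr hc), if_pos hc]
  · rw [if_neg (fun hco => hc (hiff.mp hco)), if_neg hc]

lemma resp_comp (A : Finset (Sym2 V)) {σ : V → Fin q} (hσ : Resp A σ) :
    ∀ {v w : V} (p : (gA A).Walk v w), σ v = σ w := by
  intro v w p
  induction p with
  | nil => rfl
  | cons hadj _ ih =>
    exact (hσ _ _ (by exact_mod_cast ((SimpleGraph.fromEdgeSet_adj _).mp hadj).1)).trans ih

lemma resp_iff (A : Finset (Sym2 V)) (σ : V → Fin q) :
    Resp A σ ↔ ∃ τ : Comp A → Fin q, σ = fun v => τ (ck A v) := by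
  constructor
  · intro hσ
    refine ⟨ConnectedComponent.lift σ fun v w p _ => resp_comp A hσ p, ?_⟩
    funext v
    rfl
  · rintro ⟨τ, rfl⟩ x y hxy
    by_cases hxy' : x = y
    · rw [hxy']
    · have hadj : (gA A).Adj x y :=
        (SimpleGraph.fromEdgeSet_adj _).mpr ⟨by exact_mod_cast hxy, hxy'⟩
      have hck : ck A x = ck A y := SimpleGraph.ConnectedComponent.sound hadj.reachable
      show τ (ck A x) = τ (ck A y)
      rw [hck]

lemma ck_surjective (A : Finset (Sym2 V)) : Function.Surjective (ck (V := V) A) := by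
  intro K
  exact Quot.exists_rep K

open scoped Classical in
lemma key (A : Finset (Sym2 V)) (B R : Finset V) (g : Fin q → ℂ) :
    ∑ σ : V → Fin q, (∏ e ∈ A, ((edgeDelta σ e : ℝ) : ℂ)) *
      ((∏ v ∈ B, if σ v = 0 then (1 : ℂ) else 0) * ∏ v ∈ R, g (σ v)) =
    ∏ K : Comp A, (if mC A B K = 0 then ∑ x : Fin q, g x ^ mC A R K
      else g 0 ^ mC A R K) := by
  have h1 : ∀ σ : V → Fin q, (∏ e ∈ A, ((edgeDelta σ e : ℝ) : ℂ))
      = if Resp A σ then 1 else 0 := by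
    intro σ
    rw [← Complex.ofReal_prod, prod_edgeDelta]
    split_ifs <;> simp
  simp_rw [h1, ite_mul, one_mul, zero_mul]
  rw [← Finset.sum_filter]
  have himg : (univ : Finset (V → Fin q)).filter (Resp A)
      = Finset.image (fun τ : Comp A → Fin q => fun v => τ (ck A v)) univ := by
    ext σ
    simp only [Finset.mem_filter, Finset.mem_univ, true_and, Finset.mem_image]
    rw [resp_iff]
    constructor
    · rintro ⟨τ, rfl⟩; exact ⟨τ, rfl⟩
    · rintro ⟨τ, rfl⟩; exact ⟨τ, rfl⟩
  have hinj : ∀ τ₁ ∈ (univ : Finset (Comp A → Fin q)), ∀ τ₂ ∈ (univ : Finset (Comp A → Fin q)), (fun v => τ₁ (ck A v)) = (fun v => τ₂ (ck A v)) → τ₁ = τ₂ := by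
    intro τ₁ _ τ₂ _ hτ
    funext K
    obtain ⟨v, rfl⟩ := ck_surjective A K
    exact congrFun hτ v
  rw [himg, Finset.sum_image hinj]
  have h2 : ∀ τ : Comp A → Fin q,
      (∏ v ∈ B, if τ (ck A v) = 0 then (1 : ℂ) else 0) * ∏ v ∈ R, g (τ (ck A v))
      = ∏ K : Comp A, ((if τ K = 0 then (1 : ℂ) else 0) ^ mC A B K * g (τ K) ^ mC A R K) := by
    intro τ
    rw [Finset.prod_mul_distrib]
    congr 1
    · rw [← Finset.prod_fiberwise B (ck A) (fun v => if τ (ck A v) = 0 then (1:ℂ) else 0)]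
      refine Finset.prod_congr rfl fun K _ => ?_
      rw [Finset.prod_congr rfl (fun v hv => ?_), Finset.prod_const, mC]
      rw [(Finset.mem_filter.mp hv).2]
    · rw [← Finset.prod_fiberwise R (ck A) (fun v => g (τ (ck A v)))]
      refine Finset.prod_congr rfl fun K _ => ?_
      rw [Finset.prod_congr rfl (fun v hv => ?_), Finset.prod_const, mC]
      rw [(Finset.mem_filter.mp hv).2]
  simp_rw [h2]
  rw [show (univ : Finset (Comp A → Fin q)) = Fintype.piFinset (fun _ => univ) by
    simp [Fintype.piFinset_univ]]
  rw [Finset.sum_prod_piFinset (univ : Finset (Fin q))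
    (fun K x => (if x = 0 then (1:ℂ) else 0) ^ mC A B K * g x ^ mC A R K)]
  refine Finset.prod_congr rfl fun K _ => ?_
  by_cases hb : mC A B K = 0
  · simp [hb]
  · rw [if_neg hb]
    have h3 : ∀ x : Fin q, (if x = 0 then (1:ℂ) else 0) ^ mC A B K * g x ^ mC A R K
        = if x = 0 then g x ^ mC A R K else 0 := by
      intro x
      split_ifs with h
      · simp
      · rw [zero_pow hb, zero_mul]
    simp_rw [h3]
    rw [Finset.sum_ite_eq' univ (0 : Fin q) (fun x => g x ^ mC A R K)]
    simp
section GroupCount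

lemma card_relindex_aux {G : Type*} [AddGroup G] {H K : AddSubgroup G} (hle : H ≤ K) :
    Nat.card H * H.relIndex K = Nat.card K := by
  have h2 := AddSubgroup.card_mul_index (H.addSubgroupOf K)
  rwa [Nat.card_congr (AddSubgroup.addSubgroupOfEquivOfLe hle).toEquiv] at h2

lemma card_sup_inf {G : Type*} [AddCommGroup G] [Finite G] (H K : AddSubgroup G) :
    Nat.card H * Nat.card K = Nat.card ↥(H ⊔ K) * Nat.card ↥(H ⊓ K) := by
  have h1 : Nat.card ↥(H ⊓ K) * (H ⊓ K).relIndex H = Nat.card H :=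
    card_relindex_aux inf_le_left
  have h2 : Nat.card K * K.relIndex (H ⊔ K) = Nat.card ↥(H ⊔ K) :=
    card_relindex_aux le_sup_right
  have h3 : (H ⊓ K).relIndex H = K.relIndex H := AddSubgroup.inf_relIndex_left _ _
  have h4 : K.relIndex (H ⊔ K) = K.relIndex H := AddSubgroup.relIndex_sup_right H K
  rw [← h1, h3, ← h2, h4]
  ring

lemma card_le_of_le_addSubgroup {G : Type*} [AddGroup G] [Finite G] {H K : AddSubgroup G}
    (hle : H ≤ K) : Nat.card H ≤ Nat.card K := by
  rw [← card_relindex_aux hle]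
  have hne : H.relIndex K ≠ 0 := by
    have : Finite (↥K ⧸ H.addSubgroupOf K) := Quotient.finite _
    exact AddSubgroup.index_ne_zero_of_finite
  exact Nat.le_mul_of_pos_right _ (Nat.pos_of_ne_zero hne)

end GroupCount

section SGsec

variable (q : ℕ) [NeZero q]

/-- The subgroup of spin configurations compatible with all constraints. -/
def SG (A : Finset (Sym2 V)) (B : Finset V) : AddSubgroup (V → Fin q) where
  carrier := {σ | Resp A σ ∧ ∀ v ∈ B, σ v = 0}
  zero_mem' := ⟨fun _ _ _ => rfl, fun _ _ => rfl⟩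
  add_mem' := by
    rintro σ τ ⟨h1, h2⟩ ⟨h3, h4⟩
    refine ⟨fun x y hxy => ?_, fun v hv => ?_⟩
    · show σ x + τ x = σ y + τ y
      rw [h1 x y hxy, h3 x y hxy]
    · show σ v + τ v = 0
      rw [h2 v hv, h4 v hv, add_zero]
  neg_mem' := by
    rintro σ ⟨h1, h2⟩
    refine ⟨fun x y hxy => ?_, fun v hv => ?_⟩
    · show -σ x = -σ y
      rw [h1 x y hxy]
    · show -σ v = 0
      rw [h2 v hv, neg_zero]

lemma mem_SG {A : Finset (Sym2 V)} {B : Finset V} {σ : V → Fin q} :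
    σ ∈ SG q A B ↔ Resp A σ ∧ ∀ v ∈ B, σ v = 0 := Iff.rfl

lemma SG_antitone {A A' : Finset (Sym2 V)} {B B' : Finset V} (hA : A ⊆ A') (hB : B ⊆ B') :
    SG q A' B' ≤ SG q A B := by
  rintro σ ⟨h1, h2⟩
  exact ⟨fun x y hxy => h1 x y (hA hxy), fun v hv => h2 v (hB hv)⟩

lemma SG_union {A A' : Finset (Sym2 V)} {B B' : Finset V} :
    SG q (A ∪ A') (B ∪ B') = SG q A B ⊓ SG q A' B' := by
  ext σ
  simp only [mem_SG, AddSubgroup.mem_inf]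
  constructor
  · rintro ⟨h1, h2⟩
    exact ⟨⟨fun x y hxy => h1 x y (Finset.mem_union_left _ hxy),
      fun v hv => h2 v (Finset.mem_union_left _ hv)⟩,
      ⟨fun x y hxy => h1 x y (Finset.mem_union_right _ hxy),
      fun v hv => h2 v (Finset.mem_union_right _ hv)⟩⟩
  · rintro ⟨⟨h1, h2⟩, h3, h4⟩
    refine ⟨fun x y hxy => ?_, fun v hv => ?_⟩
    · rcases Finset.mem_union.mp hxy with hx | hx
      · exact h1 x y hx
      · exact h3 x y hx
    · rcases Finset.mem_union.mp hv with hx | hx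
      · exact h2 v hx
      · exact h4 v hx

lemma SG_card_cross (A A' : Finset (Sym2 V)) (B B' : Finset V) :
    Nat.card (SG q A B) * Nat.card (SG q A' B') ≤
      Nat.card (SG q (A ∩ A') (B ∩ B')) * Nat.card (SG q (A ∪ A') (B ∪ B')) := by
  rw [card_sup_inf, ← SG_union]
  have hle : SG q A B ⊔ SG q A' B' ≤ SG q (A ∩ A') (B ∩ B') :=
    sup_le (SG_antitone q Finset.inter_subset_left Finset.inter_subset_left)
      (SG_antitone q Finset.inter_subset_right Finset.inter_subset_right)
  exact Nat.mul_le_mul_right _ (card_le_of_le_addSubgroup hle)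

end SGsec
section NRsec

variable (q : ℕ) [NeZero q]

open scoped Classical in
/-- `q ^ (number of free clusters)`. -/
noncomputable def NR (A : Finset (Sym2 V)) (B : Finset V) : ℝ :=
  ∏ K : Comp A, (if mC A B K = 0 then (q : ℝ) else 1)

lemma mC_empty (A : Finset (Sym2 V)) (K : Comp A) : mC A ∅ K = 0 := by
  classical
  simp [mC]

open scoped Classical in
lemma sum_ind_eq_NR (A : Finset (Sym2 V)) (B : Finset V) :
    ∑ σ : V → Fin q, (∏ e ∈ A, edgeDelta σ e) * (∏ v ∈ B, if σ v = 0 then (1:ℝ) else 0)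
      = NR q A B := by
  apply Complex.ofReal_injective
  have hkey := key A B ∅ (fun _ : Fin q => (1:ℂ))
  simp only [Finset.prod_empty, mul_one, mC_empty, pow_zero, one_pow, Finset.sum_const,
    Finset.card_univ, Fintype.card_fin, nsmul_eq_mul, mul_one] at hkey
  have hL : ((∑ σ : V → Fin q, (∏ e ∈ A, edgeDelta σ e) *
      (∏ v ∈ B, if σ v = 0 then (1:ℝ) else 0) : ℝ) : ℂ)
      = ∑ σ : V → Fin q, (∏ e ∈ A, ((edgeDelta σ e : ℝ) : ℂ)) *
        (∏ v ∈ B, if σ v = 0 then (1:ℂ) else 0) := by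
    push_cast [apply_ite (Complex.ofReal)]
    rfl
  rw [hL, hkey, NR]
  push_cast [apply_ite (Complex.ofReal)]
  rfl

open scoped Classical in
lemma sum_ind_eq_card (A : Finset (Sym2 V)) (B : Finset V) :
    ∑ σ : V → Fin q, (∏ e ∈ A, edgeDelta σ e) * (∏ v ∈ B, if σ v = 0 then (1:ℝ) else 0)
      = (Nat.card (SG q A B) : ℝ) := by
  have h1 : ∀ σ : V → Fin q, (∏ e ∈ A, edgeDelta σ e) *
      (∏ v ∈ B, if σ v = 0 then (1:ℝ) else 0)
      = if σ ∈ SG q A B then 1 else 0 := by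
    intro σ
    rw [prod_edgeDelta, Finset.prod_boole]
    by_cases h1 : Resp A σ <;> by_cases h2 : ∀ v ∈ B, σ v = 0 <;>
      simp [mem_SG, h1, h2]
  simp_rw [h1]
  rw [Finset.sum_boole]
  norm_cast
  rw [Nat.card_eq_fintype_card]
  rw [Fintype.card_subtype]

lemma NR_eq_card (A : Finset (Sym2 V)) (B : Finset V) :
    NR q A B = (Nat.card (SG q A B) : ℝ) := by
  rw [← sum_ind_eq_NR q A B, sum_ind_eq_card q A B]

lemma NR_cross (A A' : Finset (Sym2 V)) (B B' : Finset V) :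
    NR q A B * NR q A' B' ≤ NR q (A ∩ A') (B ∩ B') * NR q (A ∪ A') (B ∪ B') := by
  rw [NR_eq_card, NR_eq_card, NR_eq_card, NR_eq_card]
  exact_mod_cast SG_card_cross q A A' B B'

lemma NR_nonneg (A : Finset (Sym2 V)) (B : Finset V) : 0 ≤ NR q A B := by
  classical
  rw [NR]
  refine Finset.prod_nonneg fun K _ => ?_
  split_ifs
  · positivity
  · norm_num

end NRsec

section Lamsec

/-- The edge/vertex weights of the random-cluster expansion. -/
def lam (J : Sym2 V → ℝ) (h : V → ℝ) (A : Finset (Sym2 V)) (B : Finset V) : ℝ :=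
  (∏ e ∈ A, (Real.exp (J e) - 1)) * ∏ v ∈ B, (Real.exp (h v) - 1)

/-- The (unnormalized) random-cluster weights. -/
noncomputable def mu (q : ℕ) [NeZero q] (E : Finset (Sym2 V)) (J : Sym2 V → ℝ) (h : V → ℝ)
    (p : Finset (Sym2 V) × Finset V) : ℝ :=
  if p.1 ⊆ E then lam J h p.1 p.2 * NR q p.1 p.2 else 0

lemma lam_nonneg {E : Finset (Sym2 V)} {J : Sym2 V → ℝ} {h : V → ℝ}
    (hJ : ∀ e ∈ E, 0 ≤ J e) (hh : ∀ v, 0 ≤ h v) {A : Finset (Sym2 V)} {B : Finset V}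
    (hA : A ⊆ E) : 0 ≤ lam J h A B := by
  refine mul_nonneg (Finset.prod_nonneg fun e he => ?_) (Finset.prod_nonneg fun v _ => ?_)
  · have := Real.one_le_exp (hJ e (hA he))
    linarith
  · have := Real.one_le_exp (hh v)
    linarith

lemma mu_nonneg {E : Finset (Sym2 V)} {J : Sym2 V → ℝ} {h : V → ℝ}
    (q : ℕ) [NeZero q] (hJ : ∀ e ∈ E, 0 ≤ J e) (hh : ∀ v, 0 ≤ h v)
    (p : Finset (Sym2 V) × Finset V) : 0 ≤ mu q E J h p := by
  rw [mu]
  split_ifs with hA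
  · exact mul_nonneg (lam_nonneg hJ hh hA) (NR_nonneg q _ _)
  · exact le_refl 0

/-- helper for the FKG/Holley cross condition on products. -/
lemma prod_cross {ι : Type*} [DecidableEq ι] (S T : Finset ι) (a b : ι → ℝ)
    (ha : ∀ e ∈ S, 0 ≤ a e) (hb : ∀ e ∈ S ∪ T, 0 ≤ b e) (hab : ∀ e ∈ S, a e ≤ b e) :
    (∏ e ∈ S, a e) * ∏ e ∈ T, b e ≤ (∏ e ∈ S ∩ T, a e) * ∏ e ∈ S ∪ T, b e := by
  have d1 : S ∩ T ∪ S \ T = S := by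
    ext x; simp only [Finset.mem_union, Finset.mem_inter, Finset.mem_sdiff]; tauto
  have d2 : T ∪ S \ T = S ∪ T := by
    ext x; simp only [Finset.mem_union, Finset.mem_sdiff]; tauto
  have hd1 : Disjoint (S ∩ T) (S \ T) := by
    rw [Finset.disjoint_left]; intro x hx hx'
    exact (Finset.mem_sdiff.mp hx').2 (Finset.mem_inter.mp hx).2
  have hd2 : Disjoint T (S \ T) := by
    rw [Finset.disjoint_left]; intro x hx hx'
    exact (Finset.mem_sdiff.mp hx').2 hx
  have e1 : ∏ e ∈ S, a e = (∏ e ∈ S ∩ T, a e) * ∏ e ∈ S \ T, a e := by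
    rw [← Finset.prod_union hd1, d1]
  have e2 : ∏ e ∈ S ∪ T, b e = (∏ e ∈ T, b e) * ∏ e ∈ S \ T, b e := by
    rw [← Finset.prod_union hd2, d2]
  rw [e1, e2]
  have h3 : ∏ e ∈ S \ T, a e ≤ ∏ e ∈ S \ T, b e := by
    refine Finset.prod_le_prod (fun e he => ha e (Finset.sdiff_subset he)) fun e he => ?_
    exact hab e (Finset.sdiff_subset he)
  have hP1 : 0 ≤ ∏ e ∈ S ∩ T, a e :=
    Finset.prod_nonneg fun e he => ha e (Finset.mem_inter.mp he).1
  have hP2 : 0 ≤ ∏ e ∈ T, b e :=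
    Finset.prod_nonneg fun e he => hb e (Finset.mem_union_right _ he)
  calc (∏ e ∈ S ∩ T, a e) * (∏ e ∈ S \ T, a e) * ∏ e ∈ T, b e
      = ((∏ e ∈ S ∩ T, a e) * ∏ e ∈ T, b e) * ∏ e ∈ S \ T, a e := by ring
    _ ≤ ((∏ e ∈ S ∩ T, a e) * ∏ e ∈ T, b e) * ∏ e ∈ S \ T, b e :=
        mul_le_mul_of_nonneg_left h3 (mul_nonneg hP1 hP2)
    _ = (∏ e ∈ S ∩ T, a e) * ((∏ e ∈ T, b e) * ∏ e ∈ S \ T, b e) := by ring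

lemma lam_cross {E : Finset (Sym2 V)} {J J' : Sym2 V → ℝ} {h h' : V → ℝ}
    (hJ : ∀ e ∈ E, 0 ≤ J e) (hh : ∀ v, 0 ≤ h v)
    (hJJ' : ∀ e ∈ E, J e ≤ J' e) (hhh' : ∀ v, h v ≤ h' v)
    {A A' : Finset (Sym2 V)} {B B' : Finset V} (hA : A ⊆ E) (hA' : A' ⊆ E) :
    lam J h A B * lam J' h' A' B' ≤
      lam J h (A ∩ A') (B ∩ B') * lam J' h' (A ∪ A') (B ∪ B') := by
  have hedge : (∏ e ∈ A, (Real.exp (J e) - 1)) * ∏ e ∈ A', (Real.exp (J' e) - 1) ≤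
      (∏ e ∈ A ∩ A', (Real.exp (J e) - 1)) * ∏ e ∈ A ∪ A', (Real.exp (J' e) - 1) := by
    refine prod_cross A A' _ _ (fun e he => ?_) (fun e he => ?_) (fun e he => ?_)
    · have := Real.one_le_exp (hJ e (hA he)); linarith
    · have heE : e ∈ E := by
        rcases Finset.mem_union.mp he with h1 | h1
        · exact hA h1
        · exact hA' h1
      have := Real.one_le_exp (le_trans (hJ e heE) (hJJ' e heE)); linarith
    · have : Real.exp (J e) ≤ Real.exp (J' e) := Real.exp_le_exp.mpr (hJJ' e (hA he))
      linarith
  have hvert : (∏ v ∈ B, (Real.exp (h v) - 1)) * ∏ v ∈ B', (Real.exp (h' v) - 1) ≤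
      (∏ v ∈ B ∩ B', (Real.exp (h v) - 1)) * ∏ v ∈ B ∪ B', (Real.exp (h' v) - 1) := by
    refine prod_cross B B' _ _ (fun v _ => ?_) (fun v _ => ?_) (fun v _ => ?_)
    · have := Real.one_le_exp (hh v); linarith
    · have := Real.one_le_exp (le_trans (hh v) (hhh' v)); linarith
    · have : Real.exp (h v) ≤ Real.exp (h' v) := Real.exp_le_exp.mpr (hhh' v)
      linarith
  have hnn1 : 0 ≤ (∏ e ∈ A, (Real.exp (J e) - 1)) * ∏ e ∈ A', (Real.exp (J' e) - 1) := by
    refine mul_nonneg (Finset.prod_nonneg fun e he => ?_) (Finset.prod_nonneg fun e he => ?_)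
    · have := Real.one_le_exp (hJ e (hA he)); linarith
    · have := Real.one_le_exp (le_trans (hJ e (hA' he)) (hJJ' e (hA' he))); linarith
  have hnn2 : 0 ≤ (∏ v ∈ B, (Real.exp (h v) - 1)) * ∏ v ∈ B', (Real.exp (h' v) - 1) := by
    refine mul_nonneg (Finset.prod_nonneg fun v _ => ?_) (Finset.prod_nonneg fun v _ => ?_)
    · have := Real.one_le_exp (hh v); linarith
    · have := Real.one_le_exp (le_trans (hh v) (hhh' v)); linarith
  calc lam J h A B * lam J' h' A' B'
      = ((∏ e ∈ A, (Real.exp (J e) - 1)) * ∏ e ∈ A', (Real.exp (J' e) - 1)) *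
        ((∏ v ∈ B, (Real.exp (h v) - 1)) * ∏ v ∈ B', (Real.exp (h' v) - 1)) := by
        rw [lam, lam]; ring
    _ ≤ ((∏ e ∈ A ∩ A', (Real.exp (J e) - 1)) * ∏ e ∈ A ∪ A', (Real.exp (J' e) - 1)) *
        ((∏ v ∈ B ∩ B', (Real.exp (h v) - 1)) * ∏ v ∈ B ∪ B', (Real.exp (h' v) - 1)) :=
        mul_le_mul hedge hvert hnn2 (le_trans hnn1 hedge)
    _ = lam J h (A ∩ A') (B ∩ B') * lam J' h' (A ∪ A') (B ∪ B') := by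
        rw [lam, lam]; ring

lemma mu_cross {E : Finset (Sym2 V)} {J J' : Sym2 V → ℝ} {h h' : V → ℝ}
    (q : ℕ) [NeZero q]
    (hJ : ∀ e ∈ E, 0 ≤ J e) (hJ' : ∀ e ∈ E, 0 ≤ J' e)
    (hh : ∀ v, 0 ≤ h v) (hh' : ∀ v, 0 ≤ h' v)
    (hJJ' : ∀ e ∈ E, J e ≤ J' e) (hhh' : ∀ v, h v ≤ h' v)
    (a b : Finset (Sym2 V) × Finset V) :
    mu q E J h a * mu q E J' h' b ≤ mu q E J h (a ⊓ b) * mu q E J' h' (a ⊔ b) := by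
  by_cases hA : a.1 ⊆ E
  · by_cases hB : b.1 ⊆ E
    · have h1 : (a ⊓ b).1 = a.1 ∩ b.1 := rfl
      have h2 : (a ⊓ b).2 = a.2 ∩ b.2 := rfl
      have h3 : (a ⊔ b).1 = a.1 ∪ b.1 := rfl
      have h4 : (a ⊔ b).2 = a.2 ∪ b.2 := rfl
      rw [mu, mu, mu, mu, if_pos hA, if_pos hB, h1, h2, h3, h4,
        if_pos (Finset.Subset.trans Finset.inter_subset_left hA),
        if_pos (Finset.union_subset hA hB)]
      have hlam := lam_cross hJ hh hJJ' hhh' hA hB (B := a.2) (B' := b.2)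
      have hNR := NR_cross q a.1 b.1 a.2 b.2
      have hl1 : 0 ≤ lam J h a.1 a.2 * lam J' h' b.1 b.2 :=
        mul_nonneg (lam_nonneg hJ hh hA) (lam_nonneg hJ' hh' hB)
      have hn1 : 0 ≤ NR q a.1 a.2 * NR q b.1 b.2 :=
        mul_nonneg (NR_nonneg q _ _) (NR_nonneg q _ _)
      calc lam J h a.1 a.2 * NR q a.1 a.2 * (lam J' h' b.1 b.2 * NR q b.1 b.2)
          = (lam J h a.1 a.2 * lam J' h' b.1 b.2) * (NR q a.1 a.2 * NR q b.1 b.2) := by ring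
        _ ≤ (lam J h (a.1 ∩ b.1) (a.2 ∩ b.2) * lam J' h' (a.1 ∪ b.1) (a.2 ∪ b.2)) *
            (NR q (a.1 ∩ b.1) (a.2 ∩ b.2) * NR q (a.1 ∪ b.1) (a.2 ∪ b.2)) :=
            mul_le_mul hlam hNR hn1 (le_trans hl1 hlam)
        _ = lam J h (a.1 ∩ b.1) (a.2 ∩ b.2) * NR q (a.1 ∩ b.1) (a.2 ∩ b.2) *
            (lam J' h' (a.1 ∪ b.1) (a.2 ∪ b.2) * NR q (a.1 ∪ b.1) (a.2 ∪ b.2)) := by ring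
    · have hb0 : mu q E J' h' b = 0 := by rw [mu, if_neg hB]
      rw [hb0, mul_zero]
      exact mul_nonneg (mu_nonneg q hJ hh _) (mu_nonneg q hJ' hh' _)
  · have ha0 : mu q E J h a = 0 := by rw [mu, if_neg hA]
    rw [ha0, zero_mul]
    exact mul_nonneg (mu_nonneg q hJ hh _) (mu_nonneg q hJ' hh' _)

end Lamsec
section Phisec

variable {q : ℕ} [NeZero q]

open scoped Classical in
/-- conditional mean of `f^R` given the cluster configuration. -/
noncomputable def phiF (q : ℕ) [NeZero q] (f : Fin q → ℂ) (R : Finset V)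
    (p : Finset (Sym2 V) × Finset V) : ℝ :=
  ∏ K : Comp p.1, (if mC p.1 p.2 K = 0 then (powerMean q f (mC p.1 R K)).re
    else ‖f 0‖ ^ (mC p.1 R K))

lemma pm_nonneg {f : Fin q → ℂ} (hf : memF0 q f) (m : ℕ) : 0 ≤ (powerMean q f m).re :=
  (hf.1.1 m).2

lemma pm_superadd {f : Fin q → ℂ} (hf : memF0 q f) (m n : ℕ) :
    (powerMean q f m).re * (powerMean q f n).re ≤ (powerMean q f (m + n)).re :=
  hf.1.2 m n

lemma pm_le_pow {f : Fin q → ℂ} (hf : memF0 q f) (m : ℕ) :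
    (powerMean q f m).re ≤ ‖f 0‖ ^ m := by
  have h1 : (powerMean q f m).re ≤ ‖powerMean q f m‖ := Complex.re_le_norm _
  refine h1.trans ?_
  rw [powerMean, norm_div]
  have hq : (0:ℝ) < q := by
    exact_mod_cast Nat.pos_of_ne_zero (NeZero.ne q)
  have habs : ‖(q : ℂ)‖ = (q : ℝ) := Complex.norm_natCast q
  rw [habs, div_le_iff₀ hq]
  have h2 : ‖∑ x : Fin q, f x ^ m‖ ≤ ∑ x : Fin q, ‖f x‖ ^ m := by
    refine (norm_sum_le _ _).trans (le_of_eq (Finset.sum_congr rfl fun x _ => ?_))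
    rw [norm_pow]
  refine h2.trans ?_
  have h3 : ∑ x : Fin q, ‖f x‖ ^ m ≤ ∑ _x : Fin q, ‖f 0‖ ^ m :=
    Finset.sum_le_sum fun x _ => pow_le_pow_left₀ (norm_nonneg _) (hf.2.2 x) m
  refine h3.trans (le_of_eq ?_)
  rw [Finset.sum_const, Finset.card_univ, Fintype.card_fin, nsmul_eq_mul, mul_comm]

lemma pm_prod {f : Fin q → ℂ} (hf : memF0 q f) {ι : Type*} (t : Finset ι) (ht : t.Nonempty)
    (m : ι → ℕ) : ∏ i ∈ t, (powerMean q f (m i)).re ≤ (powerMean q f (∑ i ∈ t, m i)).re := by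
  induction ht using Finset.Nonempty.cons_induction with
  | singleton a => simp
  | cons a s ha hs ih =>
    rw [Finset.prod_cons, Finset.sum_cons]
    calc (powerMean q f (m a)).re * ∏ i ∈ s, (powerMean q f (m i)).re
        ≤ (powerMean q f (m a)).re * (powerMean q f (∑ i ∈ s, m i)).re :=
          mul_le_mul_of_nonneg_left ih (pm_nonneg hf _)
      _ ≤ (powerMean q f (m a + ∑ i ∈ s, m i)).re := pm_superadd hf _ _

lemma phiF_nonneg {f : Fin q → ℂ} (hf : memF0 q f) (R : Finset V)
    (p : Finset (Sym2 V) × Finset V) : 0 ≤ phiF q f R p := by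
  classical
  rw [phiF]
  refine Finset.prod_nonneg fun K _ => ?_
  split_ifs
  · exact pm_nonneg hf _
  · exact pow_nonneg (norm_nonneg _) _

lemma gA_mono {A A' : Finset (Sym2 V)} (hA : A ⊆ A') : gA A ≤ gA (V := V) A' :=
  SimpleGraph.fromEdgeSet_mono (by exact_mod_cast hA)

/-- map of clusters induced by adding edges. -/
def piMap {A A' : Finset (Sym2 V)} (hA : A ⊆ A') : Comp A → Comp A' :=
  SimpleGraph.ConnectedComponent.map (SimpleGraph.Hom.ofLE (gA_mono hA))

lemma piMap_ck {A A' : Finset (Sym2 V)} (hA : A ⊆ A') (v : V) :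
    piMap hA (ck A v) = ck A' v := rfl

open scoped Classical in
lemma mC_fiber {A A' : Finset (Sym2 V)} (hA : A ⊆ A') (R : Finset V) (K' : Comp A') :
    mC A' R K' = ∑ K ∈ Finset.univ.filter (fun K => piMap hA K = K'), mC A R K := by
  rw [mC]
  rw [Finset.card_eq_sum_card_fiberwise
    (f := ck A) (t := Finset.univ.filter (fun K => piMap hA K = K'))
    (fun v hv => Finset.mem_filter.mpr ⟨Finset.mem_univ _, by
      rw [piMap_ck hA v]; exact (Finset.mem_filter.mp hv).2⟩)]
  refine Finset.sum_congr rfl fun K hK => ?_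
  rw [mC]
  congr 1
  ext v
  have hπ := (Finset.mem_filter.mp hK).2
  simp only [Finset.mem_filter]
  constructor
  · rintro ⟨⟨h1, h2⟩, h3⟩; exact ⟨h1, h3⟩
  · rintro ⟨h1, h3⟩
    exact ⟨⟨h1, by rw [← hπ, ← h3, piMap_ck hA v]⟩, h3⟩

open scoped Classical in
lemma fiber_nonempty {A A' : Finset (Sym2 V)} (hA : A ⊆ A') (K' : Comp A') :
    (Finset.univ.filter (fun K => piMap hA K = K')).Nonempty := by
  obtain ⟨v, hv⟩ := ck_surjective A' K'
  exact ⟨ck A v, Finset.mem_filter.mpr ⟨Finset.mem_univ _, by rw [piMap_ck hA v, hv]⟩⟩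

open scoped Classical in
lemma mC_zero_of_fiber {A A' : Finset (Sym2 V)} {B B' : Finset V} (hA : A ⊆ A') (hB : B ⊆ B')
    {K : Comp A} {K' : Comp A'} (hπ : piMap hA K = K') (hb' : mC A' B' K' = 0) :
    mC A B K = 0 := by
  by_contra hne
  obtain ⟨v, hv⟩ := Finset.card_ne_zero.mp hne
  have h1 := Finset.mem_filter.mp hv
  have h2 : v ∈ B'.filter (fun v => ck A' v = K') := Finset.mem_filter.mpr
    ⟨hB h1.1, by rw [← hπ, ← h1.2, piMap_ck hA v]⟩
  have : mC A' B' K' ≠ 0 := Finset.card_ne_zero.mpr ⟨v, h2⟩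
  exact this hb'

open scoped Classical in
lemma phiF_mono {f : Fin q → ℂ} (hf : memF0 q f) (R : Finset V) :
    Monotone (phiF (V := V) q f R) := by
  intro p p' hp
  have hA : p.1 ⊆ p'.1 := Finset.le_iff_subset.mp hp.1
  have hB : p.2 ⊆ p'.2 := Finset.le_iff_subset.mp hp.2
  rw [phiF, phiF]
  rw [← Finset.prod_fiberwise Finset.univ (piMap hA)
    (fun K => if mC p.1 p.2 K = 0 then (powerMean q f (mC p.1 R K)).re
      else ‖f 0‖ ^ (mC p.1 R K))]
  refine Finset.prod_le_prod (fun K' _ => Finset.prod_nonneg fun K _ => ?_) (fun K' _ => ?_)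
  · split_ifs
    · exact pm_nonneg hf _
    · exact pow_nonneg (norm_nonneg _) _
  · by_cases hb' : mC p'.1 p'.2 K' = 0
    · rw [if_pos hb']
      rw [Finset.prod_congr rfl (fun K hK => if_pos
        (mC_zero_of_fiber hA hB (Finset.mem_filter.mp hK).2 hb'))]
      rw [mC_fiber hA R K']
      exact pm_prod hf _ (fiber_nonempty hA K') _
    · rw [if_neg hb', mC_fiber hA R K', ← Finset.prod_pow_eq_pow_sum]
      refine Finset.prod_le_prod (fun K _ => ?_) (fun K _ => ?_)
      · split_ifs
        · exact pm_nonneg hf _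
        · exact pow_nonneg (norm_nonneg _) _
      · split_ifs with hbK
        · exact pm_le_pow hf _
        · exact le_rfl

lemma factor_eq {f : Fin q → ℂ} (hf : memF0 q f) (A : Finset (Sym2 V)) (B R : Finset V) :
    (∏ K : Comp A, (if mC A B K = 0 then ∑ x : Fin q, f x ^ mC A R K else f 0 ^ mC A R K))
    = ((NR q A B * phiF q f R (A, B) : ℝ) : ℂ) := by
  classical
  rw [NR, phiF, Complex.ofReal_mul, Complex.ofReal_prod, Complex.ofReal_prod,
    ← Finset.prod_mul_distrib]
  refine Finset.prod_congr rfl fun K _ => ?_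
  by_cases hb : mC A B K = 0
  · rw [if_pos hb, if_pos hb, if_pos hb]
    have him : (powerMean q f (mC A R K)).im = 0 := (hf.1.1 _).1
    have hre : (powerMean q f (mC A R K)) = ((powerMean q f (mC A R K)).re : ℂ) :=
      Complex.ext rfl (by simp [him])
    have hq : (q : ℂ) ≠ 0 := Nat.cast_ne_zero.mpr (NeZero.ne q)
    rw [show ∑ x : Fin q, f x ^ mC A R K = powerMean q f (mC A R K) * q by
      rw [powerMean, div_mul_cancel₀ _ hq]]
    rw [hre]
    simp only [Complex.ofReal_re]
    norm_cast
    ring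
  · rw [if_neg hb, if_neg hb, if_neg hb]
    conv_lhs => rw [hf.2.1]
    push_cast
    ring

end Phisec

section Expandsec

variable (q : ℕ) [NeZero q]

lemma edgeDelta_cases (σ : V → Fin q) (e : Sym2 V) :
    edgeDelta σ e = 1 ∨ edgeDelta σ e = 0 := by
  induction e using Sym2.ind with
  | _ a b =>
    rw [edgeDelta_mk]
    by_cases hab : σ a = σ b
    · exact Or.inl (if_pos hab)
    · exact Or.inr (if_neg hab)

lemma weight_eq (E : Finset (Sym2 V)) (J : Sym2 V → ℝ) (h : V → ℝ) (σ : V → Fin q) :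
    pottsWeight q E J h σ = (∏ e ∈ E, ((Real.exp (J e) - 1) * edgeDelta σ e + 1)) *
      ∏ v : V, ((Real.exp (h v) - 1) * (if σ v = 0 then (1:ℝ) else 0) + 1) := by
  rw [pottsWeight, Real.exp_add, Real.exp_sum, Real.exp_sum]
  congr 1
  · refine Finset.prod_congr rfl fun e _ => ?_
    rcases edgeDelta_cases q σ e with hd | hd <;> rw [hd]
    · rw [mul_one, mul_one]; ring
    · rw [mul_zero, mul_zero, Real.exp_zero]; ring
  · refine Finset.prod_congr rfl fun v _ => ?_
    by_cases hv : σ v = 0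
    · rw [if_pos hv, mul_one, mul_one]; ring
    · rw [if_neg hv, mul_zero, mul_zero, Real.exp_zero]; ring

open scoped Classical in
lemma expand_sum (E : Finset (Sym2 V)) (J : Sym2 V → ℝ) (h : V → ℝ) (g : Fin q → ℂ)
    (R : Finset V) :
    ∑ σ : V → Fin q, ((pottsWeight q E J h σ : ℝ) : ℂ) * ∏ v ∈ R, g (σ v)
    = ∑ p : Finset (Sym2 V) × Finset V,
        (if p.1 ⊆ E then ((lam J h p.1 p.2 : ℝ) : ℂ) *
          ∏ K : Comp p.1, (if mC p.1 p.2 K = 0 then ∑ x : Fin q, g x ^ mC p.1 R K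
            else g 0 ^ mC p.1 R K) else 0) := by
  have h1 : ∀ σ : V → Fin q, ((pottsWeight q E J h σ : ℝ) : ℂ)
      = (∑ A ∈ E.powerset, ∏ e ∈ A, (((Real.exp (J e) - 1) : ℝ) : ℂ) * ((edgeDelta σ e : ℝ) : ℂ)) *
        (∑ B ∈ (Finset.univ : Finset V).powerset,
          ∏ v ∈ B, (((Real.exp (h v) - 1) : ℝ) : ℂ) * (if σ v = 0 then (1:ℂ) else 0)) := by
    intro σ
    rw [weight_eq q E J h σ]
    push_cast [apply_ite (Complex.ofReal)]
    rw [Finset.prod_add, Finset.prod_add]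
    simp only [Finset.prod_const_one, mul_one]
  calc ∑ σ : V → Fin q, ((pottsWeight q E J h σ : ℝ) : ℂ) * ∏ v ∈ R, g (σ v)
      = ∑ σ : V → Fin q, ∑ A ∈ E.powerset, ∑ B ∈ (Finset.univ : Finset V).powerset,
          (∏ e ∈ A, (((Real.exp (J e) - 1) : ℝ) : ℂ) * ((edgeDelta σ e : ℝ) : ℂ)) *
          ((∏ v ∈ B, (((Real.exp (h v) - 1) : ℝ) : ℂ) * (if σ v = 0 then (1:ℂ) else 0)) *
            ∏ v ∈ R, g (σ v)) := by
        refine Finset.sum_congr rfl fun σ _ => ?_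
        rw [h1 σ, Finset.sum_mul_sum, Finset.sum_mul]
        refine Finset.sum_congr rfl fun A _ => ?_
        rw [Finset.sum_mul]
        refine Finset.sum_congr rfl fun B _ => ?_
        ring
    _ = ∑ A ∈ E.powerset, ∑ B ∈ (Finset.univ : Finset V).powerset, ∑ σ : V → Fin q,
          (∏ e ∈ A, (((Real.exp (J e) - 1) : ℝ) : ℂ) * ((edgeDelta σ e : ℝ) : ℂ)) *
          ((∏ v ∈ B, (((Real.exp (h v) - 1) : ℝ) : ℂ) * (if σ v = 0 then (1:ℂ) else 0)) *
            ∏ v ∈ R, g (σ v)) := by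
        rw [Finset.sum_comm]
        refine Finset.sum_congr rfl fun A _ => ?_
        rw [Finset.sum_comm]
    _ = ∑ A ∈ E.powerset, ∑ B ∈ (Finset.univ : Finset V).powerset,
          ((lam J h A B : ℝ) : ℂ) *
          ∏ K : Comp A, (if mC A B K = 0 then ∑ x : Fin q, g x ^ mC A R K
            else g 0 ^ mC A R K) := by
        refine Finset.sum_congr rfl fun A _ => Finset.sum_congr rfl fun B _ => ?_
        calc ∑ σ : V → Fin q,
            (∏ e ∈ A, (((Real.exp (J e) - 1) : ℝ) : ℂ) * ((edgeDelta σ e : ℝ) : ℂ)) *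
            ((∏ v ∈ B, (((Real.exp (h v) - 1) : ℝ) : ℂ) * (if σ v = 0 then (1:ℂ) else 0)) *
              ∏ v ∈ R, g (σ v))
            = ∑ σ : V → Fin q,
              ((∏ e ∈ A, (((Real.exp (J e) - 1) : ℝ) : ℂ)) *
                ∏ v ∈ B, (((Real.exp (h v) - 1) : ℝ) : ℂ)) *
              ((∏ e ∈ A, ((edgeDelta σ e : ℝ) : ℂ)) *
                ((∏ v ∈ B, if σ v = 0 then (1:ℂ) else 0) * ∏ v ∈ R, g (σ v))) := by
              refine Finset.sum_congr rfl fun σ _ => ?_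
              rw [Finset.prod_mul_distrib, Finset.prod_mul_distrib]
              ring
          _ = ((∏ e ∈ A, (((Real.exp (J e) - 1) : ℝ) : ℂ)) *
                ∏ v ∈ B, (((Real.exp (h v) - 1) : ℝ) : ℂ)) *
              ∑ σ : V → Fin q, (∏ e ∈ A, ((edgeDelta σ e : ℝ) : ℂ)) *
                ((∏ v ∈ B, if σ v = 0 then (1:ℂ) else 0) * ∏ v ∈ R, g (σ v)) := by
              rw [Finset.mul_sum]
          _ = ((lam J h A B : ℝ) : ℂ) *
              ∏ K : Comp A, (if mC A B K = 0 then ∑ x : Fin q, g x ^ mC A R K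
                else g 0 ^ mC A R K) := by
              rw [key A B R g, lam]
              push_cast
              ring
    _ = ∑ p : Finset (Sym2 V) × Finset V,
          (if p.1 ⊆ E then ((lam J h p.1 p.2 : ℝ) : ℂ) *
            ∏ K : Comp p.1, (if mC p.1 p.2 K = 0 then ∑ x : Fin q, g x ^ mC p.1 R K
              else g 0 ^ mC p.1 R K) else 0) := by
        rw [Fintype.sum_prod_type]
        rw [show (E.powerset : Finset (Finset (Sym2 V)))
            = Finset.univ.filter (fun A => A ⊆ E) by
          ext A; simp [Finset.mem_powerset]]
        rw [Finset.sum_filter]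
        refine Finset.sum_congr rfl fun A _ => ?_
        by_cases hA : A ⊆ E
        · rw [if_pos hA]
          rw [Finset.powerset_univ]
          refine Finset.sum_congr rfl fun B _ => ?_
          rw [if_pos hA]
        · rw [if_neg hA]
          rw [Finset.sum_congr rfl fun B _ => if_neg hA]
          simp

lemma Z_eq (E : Finset (Sym2 V)) (J : Sym2 V → ℝ) (h : V → ℝ) :
    pottsZ q E J h = ∑ p : Finset (Sym2 V) × Finset V, mu q E J h p := by
  classical
  apply Complex.ofReal_injective
  have hexp := expand_sum q E J h (fun _ : Fin q => (1:ℂ)) ∅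
  simp only [Finset.prod_empty, mul_one, mC_empty, pow_zero, one_pow, Finset.sum_const,
    Finset.card_univ, Fintype.card_fin, nsmul_eq_mul, mul_one] at hexp
  rw [pottsZ, Complex.ofReal_sum]
  rw [hexp, Complex.ofReal_sum]
  refine Finset.sum_congr rfl fun p _ => ?_
  rw [mu]
  by_cases hp : p.1 ⊆ E
  · rw [if_pos hp, if_pos hp, Complex.ofReal_mul, NR, Complex.ofReal_prod]
    congr 1
    refine Finset.prod_congr rfl fun K _ => ?_
    split_ifs <;> simp
  · rw [if_neg hp, if_neg hp, Complex.ofReal_zero]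

lemma Num_eq (E : Finset (Sym2 V)) (J : Sym2 V → ℝ) (h : V → ℝ) {f : Fin q → ℂ}
    (hf : memF0 q f) (R : Finset V) :
    ∑ σ : V → Fin q, ((pottsWeight q E J h σ : ℝ) : ℂ) * ∏ v ∈ R, f (σ v)
      = ((∑ p : Finset (Sym2 V) × Finset V, mu q E J h p * phiF q f R p : ℝ) : ℂ) := by
  classical
  rw [expand_sum q E J h f R, Complex.ofReal_sum]
  refine Finset.sum_congr rfl fun p _ => ?_
  rw [mu]
  by_cases hp : p.1 ⊆ E
  · rw [if_pos hp, if_pos hp, factor_eq hf p.1 p.2 R]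
    push_cast
    rw [show ((p.1, p.2) : Finset (Sym2 V) × Finset V) = p from rfl]
    ring
  · rw [if_neg hp, if_neg hp, zero_mul, Complex.ofReal_zero]

lemma Z_pos (E : Finset (Sym2 V)) (J : Sym2 V → ℝ) (h : V → ℝ) :
    0 < pottsZ q E J h := by
  rw [pottsZ]
  refine Finset.sum_pos (fun σ _ => Real.exp_pos _) ⟨fun _ => 0, Finset.mem_univ _⟩

lemma mean_re (E : Finset (Sym2 V)) (J : Sym2 V → ℝ) (h : V → ℝ) {f : Fin q → ℂ}
    (hf : memF0 q f) (R : Finset V) :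
    (pottsMean q E J h f R).re
      = (∑ p : Finset (Sym2 V) × Finset V, mu q E J h p * phiF q f R p) / (pottsZ q E J h) := by
  have hz : pottsZ q E J h ≠ 0 := ne_of_gt (Z_pos q E J h)
  rw [pottsMean]
  simp_rw [pottsPMF, Complex.ofReal_div, div_mul_eq_mul_div]
  rw [← Finset.sum_div, Num_eq q E J h hf R, ← Complex.ofReal_div, Complex.ofReal_re]

end Expandsec

end PottsAux

/-- For `f ∈ F_q^0` and `R ⊆ V`, the (real-valued) Potts mean `⟨f(σ)^R⟩` is
non-decreasing in the coupling vectors `J` and `h`. -/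
theorem pottsMean_monotone
    (q : ℕ) [NeZero q] (hq : 2 ≤ q)
    (E : Finset (Sym2 V)) (hE : ∀ e ∈ E, ¬ e.IsDiag)
    (J J' : Sym2 V → ℝ) (hJ : ∀ e ∈ E, 0 ≤ J e) (hJ' : ∀ e ∈ E, 0 ≤ J' e)
    (h h' : V → ℝ) (hh : ∀ v : V, 0 ≤ h v) (hh' : ∀ v : V, 0 ≤ h' v)
    (hJJ' : ∀ e ∈ E, J e ≤ J' e) (hhh' : ∀ v : V, h v ≤ h' v)
    (f : Fin q → ℂ) (hf : memF0 q f) (R : Finset V) :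
    (pottsMean q E J h f R).re ≤ (pottsMean q E J' h' f R).re := by
  classical
  rw [PottsAux.mean_re q E J h hf R, PottsAux.mean_re q E J' h' hf R]
  set μ1 : Finset (Sym2 V) × Finset V → ℝ := PottsAux.mu q E J h with hμ1def
  set μ2 : Finset (Sym2 V) × Finset V → ℝ := PottsAux.mu q E J' h' with hμ2def
  set φ : Finset (Sym2 V) × Finset V → ℝ := PottsAux.phiF q f R with hφdef
  have hZ1 : pottsZ q E J h = ∑ p, μ1 p := PottsAux.Z_eq q E J h
  have hZ2 : pottsZ q E J' h' = ∑ p, μ2 p := PottsAux.Z_eq q E J' h'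
  have hZ1pos : 0 < pottsZ q E J h := PottsAux.Z_pos q E J h
  have hZ2pos : 0 < pottsZ q E J' h' := PottsAux.Z_pos q E J' h'
  rw [div_le_div_iff₀ hZ1pos hZ2pos, hZ1, hZ2]
  set S1 : ℝ := ∑ p, μ1 p with hS1def
  set S2 : ℝ := ∑ p, μ2 p with hS2def
  have hS1 : 0 ≤ S1 := Finset.sum_nonneg fun p _ => PottsAux.mu_nonneg q hJ hh p
  have hS2 : 0 ≤ S2 := Finset.sum_nonneg fun p _ => PottsAux.mu_nonneg q hJ' hh' p
  have hμ1n : ∀ p, 0 ≤ μ1 p := PottsAux.mu_nonneg q hJ hh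
  have hμ2n : ∀ p, 0 ≤ μ2 p := PottsAux.mu_nonneg q hJ' hh'
  have hol := holley (f := fun p => S2 * μ1 p) (g := fun p => S1 * μ2 p)
    (μ := φ)
    (fun p => PottsAux.phiF_nonneg hf R p)
    (fun p => mul_nonneg hS2 (hμ1n p))
    (fun p => mul_nonneg hS1 (hμ2n p))
    (PottsAux.phiF_mono hf R)
    (by rw [← Finset.mul_sum, ← Finset.mul_sum, ← hS1def, ← hS2def, mul_comm])
    (by
      intro a b
      have hcross := PottsAux.mu_cross q hJ hJ' hh hh' hJJ' hhh' a b
      calc S2 * μ1 a * (S1 * μ2 b) = (S2 * S1) * (μ1 a * μ2 b) := by ring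
        _ ≤ (S2 * S1) * (μ1 (a ⊓ b) * μ2 (a ⊔ b)) :=
            mul_le_mul_of_nonneg_left hcross (mul_nonneg hS2 hS1)
        _ = S2 * μ1 (a ⊓ b) * (S1 * μ2 (a ⊔ b)) := by ring)
  have e1 : ∑ p, φ p * (S2 * μ1 p) = (∑ p, μ1 p * φ p) * S2 := by
    rw [Finset.sum_mul]
    exact Finset.sum_congr rfl fun p _ => by ring
  have e2 : ∑ p, φ p * (S1 * μ2 p) = (∑ p, μ2 p * φ p) * S1 := by
    rw [Finset.sum_mul]
    exact Finset.sum_congr rfl fun p _ => by ring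
  rw [e1, e2] at hol
  exact hol
end
end

section
/- Let f ∈ F_q^0. For all R, S ⊆ V, the Potts means satisfy the GKS-type correlation inequality ⟨f(σ)^R f(σ)^S⟩ ≥ ⟨f(σ)^R⟩ · ⟨f(σ)^S⟩. -/
open Finset

noncomputable section

variable {V : Type*} [Fintype V] [DecidableEq V]

/- ===== auxiliary development for pottsMean_GKS ===== -/

section PottsAux

/-- Extension of a spin configuration to the ghost vertex, with ghost spin `0`. -/
def hatS {q : ℕ} [NeZero q] (σ : V → Fin q) : Option V → Fin q
  | none => 0
  | some v => σ v

/-- The setoid on `Option V` generated by a set of edges. -/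
def stA (A : Finset (Sym2 (Option V))) : Setoid (Option V) :=
  Relation.EqvGen.setoid (fun x y => s(x, y) ∈ A)

/-- Classes of vertices (incl. ghost) under the connectivity relation of `A`. -/
def QA (A : Finset (Sym2 (Option V))) : Type _ := Quotient (stA A)

instance (A : Finset (Sym2 (Option V))) : Finite (QA A) := Quotient.finite _
noncomputable instance (A : Finset (Sym2 (Option V))) : Fintype (QA A) := Fintype.ofFinite _
noncomputable instance (A : Finset (Sym2 (Option V))) : DecidableEq (QA A) := Classical.decEq _

/-- Class of a vertex. -/
def clsA (A : Finset (Sym2 (Option V))) (x : Option V) : QA A := Quotient.mk (stA A) x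

/-- The ghost class. -/
def ghostA (A : Finset (Sym2 (Option V))) : QA A := clsA A none

/-- Total multiplicity of `M` in a class. -/
noncomputable def mCt (A : Finset (Sym2 (Option V))) (M : V → ℕ) (c : QA A) : ℕ :=
  ∑ v ∈ Finset.univ.filter (fun v => clsA A (some v) = c), M v

/-- Compatibility of a configuration with the constraints `A`. -/
def compat (q : ℕ) [NeZero q] (A : Finset (Sym2 (Option V))) (σ : V → Fin q) : Prop :=
  ∀ x y : Option V, s(x, y) ∈ A → hatS σ x = hatS σ y

open Classical in
/-- The finset of compatible configurations. -/
noncomputable def FA (q : ℕ) [NeZero q] (A : Finset (Sym2 (Option V))) :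
    Finset (V → Fin q) :=
  Finset.univ.filter fun σ => compat q A σ

/-- Un-normalised correlation sum attached to constraints `A` and multiplicities `M`. -/
noncomputable def ZAc (q : ℕ) [NeZero q] (f : Fin q → ℂ) (A : Finset (Sym2 (Option V)))
    (M : V → ℕ) : ℂ :=
  ∑ σ : V → Fin q, (↑(∏ e ∈ A, edgeDelta (hatS σ) e) : ℂ) * ∏ v : V, f (σ v) ^ M v

/-- Real, factorised form of `ZAc`. -/
noncomputable def ZAr (q : ℕ) [NeZero q] (f : Fin q → ℂ) (A : Finset (Sym2 (Option V)))
    (M : V → ℕ) : ℝ :=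
  ‖f 0‖ ^ mCt A M (ghostA A) *
    ∏ c ∈ Finset.univ.erase (ghostA A), (q * (powerMean q f (mCt A M c)).re)

/-- Normalised class value. -/
noncomputable def nvA (q : ℕ) [NeZero q] (f : Fin q → ℂ) (A : Finset (Sym2 (Option V)))
    (M : V → ℕ) (c : QA A) : ℝ :=
  if c = ghostA A then ‖f 0‖ ^ mCt A M c else (powerMean q f (mCt A M c)).re

/-- Couplings on ghosted edges. -/
noncomputable def cC (E : Finset (Sym2 V)) (J : Sym2 V → ℝ) (h : V → ℝ) :
    Sym2 (Option V) → ℝ :=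
  Sym2.lift ⟨fun x y =>
    match x, y with
    | some a, some b => if s(a, b) ∈ E then Real.exp (J s(a, b)) - 1 else 0
    | some a, none => Real.exp (h a) - 1
    | none, some b => Real.exp (h b) - 1
    | none, none => 0,
    by
      intro x y
      match x, y with
      | some a, some b => dsimp only; rw [Sym2.eq_swap]
      | some a, none => rfl
      | none, some b => rfl
      | none, none => rfl⟩

/-- Ghosted edge set. -/
def GED (E : Finset (Sym2 V)) : Finset (Sym2 (Option V)) :=
  E.image (Sym2.map some) ∪ Finset.univ.image (fun v : V => s(some v, none))

section ScalarFacts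

variable {q : ℕ} [NeZero q] {f : Fin q → ℂ}

lemma pm_real (hf : memF0 q f) (m : ℕ) :
    powerMean q f m = ((powerMean q f m).re : ℂ) := by
  have := (hf.1.1 m).1
  apply Complex.ext <;> simp [this]

lemma Em_nonneg (hf : memF0 q f) (m : ℕ) : 0 ≤ (powerMean q f m).re := (hf.1.1 m).2

lemma Em_zero : (powerMean q f 0).re = 1 := by
  have hq : (q : ℂ) ≠ 0 := Nat.cast_ne_zero.mpr (NeZero.ne q)
  have : powerMean q f 0 = 1 := by
    simp [powerMean, Finset.card_univ, div_self hq]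
  rw [this]; simp

lemma Em_supermul (hf : memF0 q f) (m n : ℕ) :
    (powerMean q f m).re * (powerMean q f n).re ≤ (powerMean q f (m + n)).re :=
  hf.1.2 m n

lemma aR_nonneg : (0 : ℝ) ≤ ‖f 0‖ := norm_nonneg _

lemma Em_le_pow (hf : memF0 q f) (m : ℕ) :
    (powerMean q f m).re ≤ ‖f 0‖ ^ m := by
  have hq0 : (0 : ℝ) < q := by exact_mod_cast Nat.pos_of_ne_zero (NeZero.ne q)
  have h1 : (powerMean q f m).re ≤ ‖powerMean q f m‖ := Complex.re_le_norm _
  refine h1.trans ?_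
  have : ‖powerMean q f m‖ = ‖∑ x : Fin q, f x ^ m‖ / q := by
    rw [powerMean, norm_div]; simp
  rw [this, div_le_iff₀ hq0]
  calc ‖∑ x : Fin q, f x ^ m‖ ≤ ∑ x : Fin q, ‖f x ^ m‖ :=
        norm_sum_le _ _
    _ ≤ ∑ _x : Fin q, ‖f 0‖ ^ m := by
        refine Finset.sum_le_sum fun x _ => ?_
        rw [norm_pow]
        exact pow_le_pow_left₀ (norm_nonneg _) (hf.2.2 x) m
    _ = ‖f 0‖ ^ m * q := by simp [mul_comm]

lemma Em_prod_le {ι : Type*} (hf : memF0 q f) (s : Finset ι) (t : ι → ℕ) :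
    ∏ i ∈ s, (powerMean q f (t i)).re ≤ (powerMean q f (∑ i ∈ s, t i)).re := by
  classical
  induction s using Finset.cons_induction with
  | empty => simp [Em_zero]
  | cons a s ha ih =>
      rw [Finset.prod_cons, Finset.sum_cons]
      calc (powerMean q f (t a)).re * ∏ i ∈ s, (powerMean q f (t i)).re
          ≤ (powerMean q f (t a)).re * (powerMean q f (∑ i ∈ s, t i)).re := by
            exact mul_le_mul_of_nonneg_left ih (Em_nonneg hf _)
        _ ≤ _ := Em_supermul hf _ _

lemma sum_pow_eq (hf : memF0 q f) (m : ℕ) :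
    (∑ x : Fin q, f x ^ m) = (((q : ℝ) * (powerMean q f m).re : ℝ) : ℂ) := by
  have hq : (q : ℂ) ≠ 0 := Nat.cast_ne_zero.mpr (NeZero.ne q)
  have h : (∑ x : Fin q, f x ^ m) = (q : ℂ) * powerMean q f m := by
    rw [powerMean, mul_div_cancel₀ _ hq]
  rw [h, pm_real hf m]
  norm_num

end ScalarFacts

section Factorization

variable {q : ℕ} [NeZero q]

open Classical in
lemma delta_prod (A : Finset (Sym2 (Option V))) (τ : Option V → Fin q) :
    (∏ e ∈ A, edgeDelta τ e)
      = if (∀ x y : Option V, s(x, y) ∈ A → τ x = τ y) then 1 else 0 := by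
  split
  case isTrue h =>
    refine Finset.prod_eq_one fun e he => ?_
    induction e using Sym2.ind with
    | _ x y => simp [edgeDelta, Sym2.lift_mk, h x y he]
  case isFalse h =>
    push_neg at h
    obtain ⟨x, y, hxy, hne⟩ := h
    refine Finset.prod_eq_zero hxy ?_
    simp [edgeDelta, Sym2.lift_mk, hne]

lemma hatS_eqv {A : Finset (Sym2 (Option V))} {σ : V → Fin q} (hσ : compat q A σ)
    {x y : Option V} (hxy : Relation.EqvGen (fun x y => s(x, y) ∈ A) x y) :
    hatS σ x = hatS σ y := by
  induction hxy with
  | rel a b hab => exact hσ a b hab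
  | refl a => rfl
  | symm a b _ ih => exact ih.symm
  | trans a b c _ _ ih1 ih2 => exact ih1.trans ih2

lemma hatS_cls_eq {A : Finset (Sym2 (Option V))} {σ : V → Fin q} (hσ : compat q A σ)
    {x y : Option V} (hxy : clsA A x = clsA A y) : hatS σ x = hatS σ y :=
  hatS_eqv hσ (Quotient.exact hxy)

lemma mem_FA {A : Finset (Sym2 (Option V))} {σ : V → Fin q} :
    σ ∈ FA q A ↔ compat q A σ := by
  simp [FA]

open Classical in
lemma ZAc_eq_sum (f : Fin q → ℂ) (A : Finset (Sym2 (Option V))) (M : V → ℕ) :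
    ZAc q f A M = ∑ σ ∈ FA q A, ∏ v : V, f (σ v) ^ M v := by
  rw [FA, Finset.sum_filter, ZAc]
  refine Finset.sum_congr rfl fun σ _ => ?_
  rw [delta_prod A (hatS σ)]
  by_cases hc : compat q A σ
  · rw [if_pos (show (∀ x y : Option V, s(x, y) ∈ A → hatS σ x = hatS σ y) from hc),
      if_pos hc]
    norm_num
  · rw [if_neg (show ¬ (∀ x y : Option V, s(x, y) ∈ A → hatS σ x = hatS σ y) from hc),
      if_neg hc]
    norm_num

lemma sum_compat_eq (f : Fin q → ℂ) (A : Finset (Sym2 (Option V))) (M : V → ℕ) :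
    ∑ σ ∈ FA q A, ∏ v : V, f (σ v) ^ M v
      = ∑ g ∈ Finset.univ.filter (fun g : QA A → Fin q => g (ghostA A) = 0),
          ∏ v : V, f (g (clsA A (some v))) ^ M v := by
  classical
  have key : ∀ (σ : V → Fin q), compat q A σ → ∀ v : V, hatS σ (clsA A (some v)).out = σ v := by
    intro σ hσ v
    have : hatS σ (clsA A (some v)).out = hatS σ (some v) :=
      hatS_cls_eq hσ (Quotient.out_eq _)
    simpa [hatS] using this
  refine Finset.sum_bij' (i := fun σ _ => fun c : QA A => hatS σ c.out)
    (j := fun g _ => fun v => g (clsA A (some v))) ?_ ?_ ?_ ?_ ?_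
  · -- maps into the filter
    intro σ hσ
    rw [mem_FA] at hσ
    simp only [Finset.mem_filter, Finset.mem_univ, true_and]
    have : hatS σ (ghostA A).out = hatS σ none :=
      hatS_cls_eq hσ (Quotient.out_eq _)
    simpa [hatS] using this
  · -- j maps into FA
    intro g hg
    simp only [Finset.mem_filter, Finset.mem_univ, true_and] at hg
    rw [mem_FA]
    intro x y hxy
    have hx : ∀ z : Option V, hatS (fun v => g (clsA A (some v))) z = g (clsA A z) := by
      intro z
      match z with
      | some v => rfl
      | none => simpa [hatS, ghostA] using hg.symm
    rw [hx, hx]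
    have : clsA A x = clsA A y := Quotient.sound (Relation.EqvGen.rel x y hxy)
    rw [this]
  · -- left inverse
    intro σ hσ
    rw [mem_FA] at hσ
    funext v
    exact key σ hσ v
  · -- right inverse
    intro g hg
    simp only [Finset.mem_filter, Finset.mem_univ, true_and] at hg
    funext c
    have hx : ∀ z : Option V, hatS (fun v => g (clsA A (some v))) z = g (clsA A z) := by
      intro z
      match z with
      | some v => rfl
      | none => simpa [hatS, ghostA] using hg.symm
    show hatS (fun v => g (clsA A (some v))) c.out = g c
    rw [hx]
    exact congrArg g (Quotient.out_eq _)
  · -- values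
    intro σ hσ
    rw [mem_FA] at hσ
    refine Finset.prod_congr rfl fun v _ => ?_
    show f (σ v) ^ M v = f (hatS σ (clsA A (some v)).out) ^ M v
    rw [key σ hσ v]

open Classical in
lemma sum_cls_factor (f : Fin q → ℂ) (A : Finset (Sym2 (Option V))) (M : V → ℕ) :
    ∑ g ∈ Finset.univ.filter (fun g : QA A → Fin q => g (ghostA A) = 0),
        ∏ v : V, f (g (clsA A (some v))) ^ M v
      = f 0 ^ mCt A M (ghostA A) *
          ∏ c ∈ Finset.univ.erase (ghostA A), (∑ x : Fin q, f x ^ mCt A M c) := by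
  classical
  -- first rewrite each summand as a product over classes
  have hre : ∀ g : QA A → Fin q,
      ∏ v : V, f (g (clsA A (some v))) ^ M v = ∏ c : QA A, f (g c) ^ mCt A M c := by
    intro g
    rw [← Finset.prod_fiberwise Finset.univ (fun v => clsA A (some v))
      (fun v => f (g (clsA A (some v))) ^ M v)]
    refine Finset.prod_congr rfl fun c _ => ?_
    rw [mCt, ← Finset.prod_pow_eq_pow_sum]
    refine Finset.prod_congr rfl fun v hv => ?_
    rw [(Finset.mem_filter.mp hv).2]
  -- incorporate the ghost constraint as a factor
  set u : QA A → Fin q → ℂ :=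
    fun c x => if c = ghostA A then (if x = 0 then f x ^ mCt A M c else 0)
      else f x ^ mCt A M c with hu
  have huc : ∀ (g : QA A → Fin q),
      (if g (ghostA A) = 0 then ∏ c : QA A, f (g c) ^ mCt A M c else 0)
        = ∏ c : QA A, u c (g c) := by
    intro g
    have h1 : ∏ c : QA A, u c (g c)
        = u (ghostA A) (g (ghostA A)) * ∏ c ∈ Finset.univ.erase (ghostA A), u c (g c) :=
      (Finset.mul_prod_erase Finset.univ _ (Finset.mem_univ _)).symm
    have h2 : ∏ c ∈ Finset.univ.erase (ghostA A), u c (g c)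
        = ∏ c ∈ Finset.univ.erase (ghostA A), f (g c) ^ mCt A M c := by
      refine Finset.prod_congr rfl fun c hc => ?_
      simp only [hu, if_neg (Finset.ne_of_mem_erase hc)]
    have h3 : ∏ c : QA A, f (g c) ^ mCt A M c
        = f (g (ghostA A)) ^ mCt A M (ghostA A) *
            ∏ c ∈ Finset.univ.erase (ghostA A), f (g c) ^ mCt A M c :=
      (Finset.mul_prod_erase Finset.univ _ (Finset.mem_univ _)).symm
    by_cases hg : g (ghostA A) = 0
    · rw [if_pos hg, h1, h2, h3]
      congr 1
      simp only [hu, if_pos rfl, if_pos hg]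
    · rw [if_neg hg, h1]
      have hz : u (ghostA A) (g (ghostA A)) = 0 := by
        simp only [hu, if_pos rfl, if_neg hg]
      rw [hz, zero_mul]
  calc ∑ g ∈ Finset.univ.filter (fun g : QA A → Fin q => g (ghostA A) = 0),
        ∏ v : V, f (g (clsA A (some v))) ^ M v
      = ∑ g ∈ Finset.univ.filter (fun g : QA A → Fin q => g (ghostA A) = 0),
          ∏ c : QA A, f (g c) ^ mCt A M c := Finset.sum_congr rfl (fun g _ => hre g)
    _ = ∑ g : QA A → Fin q,
          if g (ghostA A) = 0 then ∏ c : QA A, f (g c) ^ mCt A M c else 0 :=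
        Finset.sum_filter _ _
    _ = ∑ g : QA A → Fin q, ∏ c : QA A, u c (g c) :=
        Finset.sum_congr rfl fun g _ => huc g
    _ = ∏ c : QA A, ∑ x : Fin q, u c x := by
        rw [← Fintype.piFinset_univ, Finset.sum_prod_piFinset]
    _ = f 0 ^ mCt A M (ghostA A) *
          ∏ c ∈ Finset.univ.erase (ghostA A), (∑ x : Fin q, f x ^ mCt A M c) := by
        rw [← Finset.mul_prod_erase Finset.univ (fun c => ∑ x : Fin q, u c x)
          (Finset.mem_univ (ghostA A))]
        congr 1
        · simp only [hu, if_pos rfl]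
          rw [Finset.sum_ite_eq' Finset.univ (0 : Fin q) (fun x => f x ^ mCt A M (ghostA A))]
          rw [if_pos (Finset.mem_univ _)]
        · refine Finset.prod_congr rfl fun c hc => ?_
          refine Finset.sum_congr rfl fun x _ => ?_
          simp only [hu, if_neg (Finset.ne_of_mem_erase hc)]

lemma mCt_zero (A : Finset (Sym2 (Option V))) (c : QA A) : mCt A (fun _ => 0) c = 0 := by
  simp [mCt]

lemma ZAc_factor (f : Fin q → ℂ) (A : Finset (Sym2 (Option V))) (M : V → ℕ) :
    ZAc q f A M = f 0 ^ mCt A M (ghostA A) *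
      ∏ c ∈ Finset.univ.erase (ghostA A), (∑ x : Fin q, f x ^ mCt A M c) := by
  rw [ZAc_eq_sum, sum_compat_eq, sum_cls_factor]

lemma ZAc_eq_ZAr {f : Fin q → ℂ} (hf : memF0 q f) (A : Finset (Sym2 (Option V)))
    (M : V → ℕ) : ZAc q f A M = ((ZAr q f A M : ℝ) : ℂ) := by
  rw [ZAc_factor, ZAr]
  push_cast
  congr 1
  · conv_lhs => rw [hf.2.1]
  · refine Finset.prod_congr rfl fun c _ => ?_
    rw [sum_pow_eq hf]
    push_cast
    ring

lemma card_FA (A : Finset (Sym2 (Option V))) :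
    ((FA q A).card : ℝ) = (q : ℝ) ^ (Finset.univ.erase (ghostA A)).card := by
  have h1 : ZAc q (fun _ : Fin q => 1) A (fun _ => 0) = ((FA q A).card : ℂ) := by
    rw [ZAc_eq_sum]
    simp
  have h2 : ZAc q (fun _ : Fin q => 1) A (fun _ => 0) = ((q : ℂ)) ^ (Finset.univ.erase (ghostA A)).card := by
    rw [ZAc_factor]
    simp [mCt_zero, Finset.card_univ]
  rw [h1] at h2
  exact_mod_cast h2

end Factorization

section ZArFacts

variable {q : ℕ} [NeZero q] {f : Fin q → ℂ}

lemma mCt_add (A : Finset (Sym2 (Option V))) (M N : V → ℕ) (c : QA A) :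
    mCt A (fun v => M v + N v) c = mCt A M c + mCt A N c := by
  simp [mCt, Finset.sum_add_distrib]

lemma ZAr_nonneg (hf : memF0 q f) (A : Finset (Sym2 (Option V))) (M : V → ℕ) :
    0 ≤ ZAr q f A M := by
  refine mul_nonneg (pow_nonneg aR_nonneg _) ?_
  exact Finset.prod_nonneg fun c _ => mul_nonneg (Nat.cast_nonneg q) (Em_nonneg hf _)

lemma ZAr_zero (A : Finset (Sym2 (Option V))) :
    ZAr q f A (fun _ => 0) = (q : ℝ) ^ (Finset.univ.erase (ghostA A)).card := by
  rw [ZAr]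
  simp [mCt_zero, Em_zero, Finset.prod_const]

lemma ZAr_zero_pos (A : Finset (Sym2 (Option V))) : 0 < ZAr q f A (fun _ => 0) := by
  rw [ZAr_zero]
  have hq : (0 : ℝ) < q := by exact_mod_cast Nat.pos_of_ne_zero (NeZero.ne q)
  positivity

lemma ZAr_supermul (hf : memF0 q f) (A : Finset (Sym2 (Option V))) (M N : V → ℕ) :
    ZAr q f A M * ZAr q f A N
      ≤ ZAr q f A (fun v => M v + N v) * ZAr q f A (fun _ => 0) := by
  rw [ZAr, ZAr, ZAr, ZAr]
  simp only [mCt_add, mCt_zero, pow_zero, Em_zero, one_mul, mul_one, pow_add]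
  have hq : (0 : ℝ) ≤ q := Nat.cast_nonneg q
  have key : (∏ c ∈ Finset.univ.erase (ghostA A), ((q : ℝ) * (powerMean q f (mCt A M c)).re)) *
      (∏ c ∈ Finset.univ.erase (ghostA A), ((q : ℝ) * (powerMean q f (mCt A N c)).re)) ≤
      (∏ c ∈ Finset.univ.erase (ghostA A),
        ((q : ℝ) * (powerMean q f (mCt A M c + mCt A N c)).re)) *
      (∏ c ∈ Finset.univ.erase (ghostA A), (q : ℝ)) := by
    rw [← Finset.prod_mul_distrib, ← Finset.prod_mul_distrib]
    refine Finset.prod_le_prod (fun c _ => mul_nonneg (mul_nonneg hq (Em_nonneg hf _))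
      (mul_nonneg hq (Em_nonneg hf _))) (fun c _ => ?_)
    calc (q : ℝ) * (powerMean q f (mCt A M c)).re * ((q : ℝ) * (powerMean q f (mCt A N c)).re)
        = (q : ℝ) * (q : ℝ) * ((powerMean q f (mCt A M c)).re * (powerMean q f (mCt A N c)).re) := by
          ring
      _ ≤ (q : ℝ) * (q : ℝ) * (powerMean q f (mCt A M c + mCt A N c)).re := by
          exact mul_le_mul_of_nonneg_left (Em_supermul hf _ _) (by positivity)
      _ = (q : ℝ) * (powerMean q f (mCt A M c + mCt A N c)).re * (q : ℝ) := by ring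
  calc ‖f 0‖ ^ mCt A M (ghostA A) *
        (∏ c ∈ Finset.univ.erase (ghostA A), ((q : ℝ) * (powerMean q f (mCt A M c)).re)) *
        (‖f 0‖ ^ mCt A N (ghostA A) *
          ∏ c ∈ Finset.univ.erase (ghostA A), ((q : ℝ) * (powerMean q f (mCt A N c)).re))
      = ‖f 0‖ ^ mCt A M (ghostA A) * ‖f 0‖ ^ mCt A N (ghostA A) *
        ((∏ c ∈ Finset.univ.erase (ghostA A), ((q : ℝ) * (powerMean q f (mCt A M c)).re)) *
          ∏ c ∈ Finset.univ.erase (ghostA A), ((q : ℝ) * (powerMean q f (mCt A N c)).re)) := by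
        ring
    _ ≤ ‖f 0‖ ^ mCt A M (ghostA A) * ‖f 0‖ ^ mCt A N (ghostA A) *
        ((∏ c ∈ Finset.univ.erase (ghostA A),
          ((q : ℝ) * (powerMean q f (mCt A M c + mCt A N c)).re)) *
          ∏ c ∈ Finset.univ.erase (ghostA A), (q : ℝ)) := by
        exact mul_le_mul_of_nonneg_left key
          (mul_nonneg (pow_nonneg aR_nonneg _) (pow_nonneg aR_nonneg _))
    _ = ‖f 0‖ ^ mCt A M (ghostA A) * ‖f 0‖ ^ mCt A N (ghostA A) *
        (∏ c ∈ Finset.univ.erase (ghostA A),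
          ((q : ℝ) * (powerMean q f (mCt A M c + mCt A N c)).re)) *
        ∏ c ∈ Finset.univ.erase (ghostA A), (q : ℝ) := by ring

/-- Map on classes induced by enlarging the constraint set. -/
def piAB {A B : Finset (Sym2 (Option V))} (hAB : A ⊆ B) : QA A → QA B :=
  Quotient.lift (fun x => clsA B x) (fun x y hxy =>
    Quotient.sound (Relation.EqvGen.mono (r := fun x y => s(x, y) ∈ A) (p := fun x y => s(x, y) ∈ B)
      (fun a b hab => hAB hab) _ _ hxy))

lemma piAB_cls {A B : Finset (Sym2 (Option V))} (hAB : A ⊆ B) (x : Option V) :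
    piAB hAB (clsA A x) = clsA B x := rfl

lemma piAB_ghost {A B : Finset (Sym2 (Option V))} (hAB : A ⊆ B) :
    piAB hAB (ghostA A) = ghostA B := rfl

lemma mCt_fiber {A B : Finset (Sym2 (Option V))} (hAB : A ⊆ B) (M : V → ℕ) (d : QA B) :
    mCt B M d = ∑ c ∈ Finset.univ.filter (fun c => piAB hAB c = d), mCt A M c := by
  classical
  simp only [mCt]
  rw [Finset.sum_fiberwise_eq_sum_filter Finset.univ
    (Finset.univ.filter (fun c => piAB hAB c = d)) (fun v => clsA A (some v)) M]
  congr 1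
  ext v
  simp [piAB_cls]

lemma nvA_nonneg (hf : memF0 q f) (A : Finset (Sym2 (Option V))) (M : V → ℕ) (c : QA A) :
    0 ≤ nvA q f A M c := by
  unfold nvA; split
  · exact pow_nonneg aR_nonneg _
  · exact Em_nonneg hf _

lemma ZAr_eq_nv (A : Finset (Sym2 (Option V))) (M : V → ℕ) :
    ZAr q f A M = (q : ℝ) ^ (Finset.univ.erase (ghostA A)).card * ∏ c : QA A, nvA q f A M c := by
  rw [ZAr, ← Finset.mul_prod_erase Finset.univ (nvA q f A M) (Finset.mem_univ (ghostA A))]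
  have h1 : nvA q f A M (ghostA A) = ‖f 0‖ ^ mCt A M (ghostA A) := if_pos rfl
  have h2 : ∏ c ∈ Finset.univ.erase (ghostA A), nvA q f A M c
      = ∏ c ∈ Finset.univ.erase (ghostA A), (powerMean q f (mCt A M c)).re :=
    Finset.prod_congr rfl fun c hc => if_neg (Finset.ne_of_mem_erase hc)
  rw [h1, h2, Finset.prod_mul_distrib, Finset.prod_const]
  ring

lemma nv_prod_mono (hf : memF0 q f) {A B : Finset (Sym2 (Option V))} (hAB : A ⊆ B) (M : V → ℕ) :
    ∏ c : QA A, nvA q f A M c ≤ ∏ d : QA B, nvA q f B M d := by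
  classical
  rw [← Finset.prod_fiberwise Finset.univ (piAB hAB) (nvA q f A M)]
  refine Finset.prod_le_prod
    (fun d _ => Finset.prod_nonneg fun c _ => nvA_nonneg hf _ _ _) (fun d _ => ?_)
  by_cases hd : d = ghostA B
  · subst hd
    have hg : ghostA A ∈ Finset.univ.filter (fun c => piAB hAB c = ghostA B) := by
      simp [piAB_ghost]
    rw [← Finset.mul_prod_erase _ _ hg]
    have h1 : nvA q f A M (ghostA A) = ‖f 0‖ ^ mCt A M (ghostA A) := if_pos rfl
    have h2 : ∏ c ∈ (Finset.univ.filter (fun c => piAB hAB c = ghostA B)).erase (ghostA A),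
          nvA q f A M c
        ≤ ∏ c ∈ (Finset.univ.filter (fun c => piAB hAB c = ghostA B)).erase (ghostA A),
            ‖f 0‖ ^ mCt A M c := by
      refine Finset.prod_le_prod (fun c _ => nvA_nonneg hf _ _ _) (fun c hc => ?_)
      rw [nvA, if_neg (Finset.ne_of_mem_erase hc)]
      exact Em_le_pow hf _
    rw [h1]
    calc ‖f 0‖ ^ mCt A M (ghostA A) *
          ∏ c ∈ (Finset.univ.filter (fun c => piAB hAB c = ghostA B)).erase (ghostA A),
            nvA q f A M c
        ≤ ‖f 0‖ ^ mCt A M (ghostA A) *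
          ∏ c ∈ (Finset.univ.filter (fun c => piAB hAB c = ghostA B)).erase (ghostA A),
            ‖f 0‖ ^ mCt A M c :=
          mul_le_mul_of_nonneg_left h2 (pow_nonneg aR_nonneg _)
      _ = ‖f 0‖ ^ (mCt A M (ghostA A) +
            ∑ c ∈ (Finset.univ.filter (fun c => piAB hAB c = ghostA B)).erase (ghostA A),
              mCt A M c) := by
          rw [Finset.prod_pow_eq_pow_sum, ← pow_add]
      _ = nvA q f B M (ghostA B) := by
          rw [nvA, if_pos rfl, mCt_fiber hAB M (ghostA B), ← Finset.add_sum_erase _ _ hg]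
  · have hc' : ∀ c ∈ Finset.univ.filter (fun c => piAB hAB c = d), c ≠ ghostA A := by
      intro c hc hcg
      apply hd
      rw [← (Finset.mem_filter.mp hc).2, hcg, piAB_ghost]
    have h2 : ∏ c ∈ Finset.univ.filter (fun c => piAB hAB c = d), nvA q f A M c
        = ∏ c ∈ Finset.univ.filter (fun c => piAB hAB c = d),
            (powerMean q f (mCt A M c)).re :=
      Finset.prod_congr rfl fun c hc => if_neg (hc' c hc)
    rw [h2, nvA, if_neg hd, mCt_fiber hAB M d]
    exact Em_prod_le hf _ _

lemma ZAr_mono (hf : memF0 q f) {A B : Finset (Sym2 (Option V))} (hAB : A ⊆ B) (M : V → ℕ) :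
    ZAr q f A M * ZAr q f B (fun _ => 0) ≤ ZAr q f B M * ZAr q f A (fun _ => 0) := by
  rw [ZAr_eq_nv A M, ZAr_eq_nv B M, ZAr_zero, ZAr_zero]
  have hq : (0 : ℝ) ≤ (q : ℝ) ^ (Finset.univ.erase (ghostA A)).card *
      (q : ℝ) ^ (Finset.univ.erase (ghostA B)).card :=
    mul_nonneg (pow_nonneg (Nat.cast_nonneg q) _) (pow_nonneg (Nat.cast_nonneg q) _)
  have h := mul_le_mul_of_nonneg_left (nv_prod_mono hf hAB M) hq
  calc (q : ℝ) ^ (Finset.univ.erase (ghostA A)).card * (∏ c : QA A, nvA q f A M c) *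
        (q : ℝ) ^ (Finset.univ.erase (ghostA B)).card
      = (q : ℝ) ^ (Finset.univ.erase (ghostA A)).card *
          (q : ℝ) ^ (Finset.univ.erase (ghostA B)).card * ∏ c : QA A, nvA q f A M c := by ring
    _ ≤ (q : ℝ) ^ (Finset.univ.erase (ghostA A)).card *
          (q : ℝ) ^ (Finset.univ.erase (ghostA B)).card * ∏ d : QA B, nvA q f B M d := h
    _ = (q : ℝ) ^ (Finset.univ.erase (ghostA B)).card * (∏ d : QA B, nvA q f B M d) *
          (q : ℝ) ^ (Finset.univ.erase (ghostA A)).card := by ring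

end ZArFacts

section Supermod

variable {q : ℕ} [NeZero q]

lemma hatS_add (σ τ : V → Fin q) (x : Option V) :
    hatS (σ + τ) x = hatS σ x + hatS τ x := by
  cases x
  · show (0 : Fin q) = 0 + 0
    rw [add_zero]
  · rfl

lemma hatS_sub (σ τ : V → Fin q) (x : Option V) :
    hatS (σ - τ) x = hatS σ x - hatS τ x := by
  cases x
  · show (0 : Fin q) = 0 - 0
    rw [sub_zero]
  · rfl

lemma compat_add {A : Finset (Sym2 (Option V))} {σ τ : V → Fin q}
    (hσ : compat q A σ) (hτ : compat q A τ) : compat q A (σ + τ) := by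
  intro x y hxy
  rw [hatS_add, hatS_add, hσ x y hxy, hτ x y hxy]

lemma compat_sub {A : Finset (Sym2 (Option V))} {σ τ : V → Fin q}
    (hσ : compat q A σ) (hτ : compat q A τ) : compat q A (σ - τ) := by
  intro x y hxy
  rw [hatS_sub, hatS_sub, hσ x y hxy, hτ x y hxy]

lemma compat_mono {A B : Finset (Sym2 (Option V))} (hAB : A ⊆ B) {σ : V → Fin q}
    (h : compat q B σ) : compat q A σ := fun x y hxy => h x y (hAB hxy)

lemma compat_union {A B : Finset (Sym2 (Option V))} {σ : V → Fin q} :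
    compat q (A ∪ B) σ ↔ compat q A σ ∧ compat q B σ := by
  constructor
  · intro h
    exact ⟨compat_mono Finset.subset_union_left h, compat_mono Finset.subset_union_right h⟩
  · rintro ⟨h1, h2⟩ x y hxy
    rcases Finset.mem_union.mp hxy with h | h
    · exact h1 x y h
    · exact h2 x y h

lemma card_FA_supermod (A B : Finset (Sym2 (Option V))) :
    (FA q A).card * (FA q B).card ≤ (FA q (A ∩ B)).card * (FA q (A ∪ B)).card := by
  classical
  rw [← Finset.card_product]
  rw [Finset.card_eq_sum_card_fiberwise
    (fun (p : (V → Fin q) × (V → Fin q)) hp =>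
      Finset.mem_image_of_mem (fun p => p.1 + p.2) hp)]
  have hfib : ∀ ρ ∈ ((FA q A) ×ˢ (FA q B)).image (fun p => p.1 + p.2),
      (((FA q A) ×ˢ (FA q B)).filter (fun p => p.1 + p.2 = ρ)).card
        = (FA q (A ∪ B)).card := by
    intro ρ hρ
    obtain ⟨p₀, hp₀, rfl⟩ := Finset.mem_image.mp hρ
    obtain ⟨ha, hb⟩ := Finset.mem_product.mp hp₀
    rw [mem_FA] at ha hb
    refine (Finset.card_bij (fun d _ => (p₀.1 + d, p₀.2 - d)) ?_ ?_ ?_).symm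
    · intro d hd
      rw [mem_FA, compat_union] at hd
      refine Finset.mem_filter.mpr ⟨Finset.mem_product.mpr ⟨?_, ?_⟩, ?_⟩
      · exact mem_FA.mpr (compat_add ha hd.1)
      · exact mem_FA.mpr (compat_sub hb hd.2)
      · show p₀.1 + d + (p₀.2 - d) = p₀.1 + p₀.2
        abel
    · intro d1 h1 d2 h2 heq
      have := congrArg Prod.fst heq
      simpa using this
    · intro p hp
      obtain ⟨hpP, hps⟩ := Finset.mem_filter.mp hp
      obtain ⟨hpa, hpb⟩ := Finset.mem_product.mp hpP
      rw [mem_FA] at hpa hpb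
      refine ⟨p.1 - p₀.1, ?_, ?_⟩
      · rw [mem_FA, compat_union]
        refine ⟨compat_sub hpa ha, ?_⟩
        have hd : p.1 - p₀.1 = p₀.2 - p.2 := by
          rw [sub_eq_sub_iff_add_eq_add, add_comm p₀.2 p₀.1]
          exact hps
        rw [hd]
        exact compat_sub hb hpb
      · have h2 : p₀.2 - (p.1 - p₀.1) = p.2 := by
          have hx : p.2 = p₀.1 + p₀.2 - p.1 := by rw [← hps]; abel
          rw [hx]; abel
        have h1 : p₀.1 + (p.1 - p₀.1) = p.1 := by abel
        exact Prod.ext h1 h2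
  rw [Finset.sum_congr rfl hfib, Finset.sum_const, smul_eq_mul]
  refine Nat.mul_le_mul_right _ ?_
  refine Finset.card_le_card ?_
  intro ρ hρ
  obtain ⟨p₀, hp₀, rfl⟩ := Finset.mem_image.mp hρ
  obtain ⟨ha, hb⟩ := Finset.mem_product.mp hp₀
  rw [mem_FA] at ha hb ⊢
  exact compat_add (compat_mono Finset.inter_subset_left ha)
    (compat_mono Finset.inter_subset_right hb)

lemma ZAr_zero_supermod (f : Fin q → ℂ) (A B : Finset (Sym2 (Option V))) :
    ZAr q f A (fun _ => 0) * ZAr q f B (fun _ => 0)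
      ≤ ZAr q f (A ∩ B) (fun _ => 0) * ZAr q f (A ∪ B) (fun _ => 0) := by
  rw [ZAr_zero, ZAr_zero, ZAr_zero, ZAr_zero, ← card_FA, ← card_FA, ← card_FA, ← card_FA]
  exact_mod_cast card_FA_supermod A B

end Supermod

section Expansion

variable {q : ℕ} [NeZero q]
variable {E : Finset (Sym2 V)} {J : Sym2 V → ℝ} {h : V → ℝ}

lemma cC_nonneg (hJ : ∀ e ∈ E, 0 ≤ J e) (hh : ∀ v, 0 ≤ h v) (e : Sym2 (Option V)) :
    0 ≤ cC E J h e := by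
  have hexp : ∀ r : ℝ, 0 ≤ r → 0 ≤ Real.exp r - 1 := fun r hr => by
    have := Real.one_le_exp hr; linarith
  induction e using Sym2.ind with
  | _ x y =>
    match x, y with
    | some a, some b =>
      simp only [cC, Sym2.lift_mk]
      split
      case isTrue hmem => exact hexp _ (hJ _ hmem)
      case isFalse => exact le_refl 0
    | some a, none => exact hexp _ (hh a)
    | none, some b => exact hexp _ (hh b)
    | none, none => exact le_refl 0

lemma cC_zero (he : ∀ e0 : Sym2 (Option V), e0 ∈ GED E → False) : True := trivial

lemma cC_eq_zero {e : Sym2 (Option V)} (he : e ∉ GED E) : cC E J h e = 0 := by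
  induction e using Sym2.ind with
  | _ x y =>
    match x, y with
    | some a, some b =>
      simp only [cC, Sym2.lift_mk]
      rw [if_neg]
      intro hmem
      exact he (Finset.mem_union_left _
        (Finset.mem_image.mpr ⟨s(a, b), hmem, Sym2.map_pair_eq some a b⟩))
    | some a, none =>
      exact absurd (Finset.mem_union_right _
        (Finset.mem_image.mpr ⟨a, Finset.mem_univ a, rfl⟩)) he
    | none, some b =>
      refine absurd (Finset.mem_union_right _
        (Finset.mem_image.mpr ⟨b, Finset.mem_univ b, ?_⟩)) he
      rw [Sym2.eq_swap]
    | none, none => rfl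

lemma edgeDelta_map (σ : V → Fin q) (e : Sym2 V) :
    edgeDelta (hatS σ) (Sym2.map some e) = edgeDelta σ e := by
  induction e using Sym2.ind with
  | _ x y => rw [Sym2.map_pair_eq]; rfl

lemma GED_disj :
    Disjoint (E.image (Sym2.map some))
      (Finset.univ.image fun v : V => s(some v, none)) := by
  rw [Finset.disjoint_left]
  rintro e he1 he2
  obtain ⟨e0, _, rfl⟩ := Finset.mem_image.mp he1
  obtain ⟨v, _, hv⟩ := Finset.mem_image.mp he2
  induction e0 using Sym2.ind with
  | _ x y =>
    rw [Sym2.map_pair_eq, Sym2.eq_iff] at hv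
    rcases hv with ⟨_, h2⟩ | ⟨h1, _⟩ <;> simp_all

lemma weight_eq (σ : V → Fin q) :
    pottsWeight q E J h σ = ∏ e ∈ GED E, (1 + cC E J h e * edgeDelta (hatS σ) e) := by
  rw [pottsWeight, Real.exp_add, Real.exp_sum, Real.exp_sum, GED,
    Finset.prod_union GED_disj]
  congr 1
  · rw [Finset.prod_image (fun a _ b _ hab => Sym2.map.injective (Option.some_injective V) hab)]
    refine Finset.prod_congr rfl fun e he => ?_
    induction e using Sym2.ind with
    | _ x y =>
      rw [edgeDelta_map, Sym2.map_pair_eq]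
      have hc : cC E J h s(some x, some y) = Real.exp (J s(x, y)) - 1 := by
        simp only [cC, Sym2.lift_mk]
        rw [if_pos he]
      rw [hc]
      have hδ : edgeDelta σ s(x, y) = if σ x = σ y then 1 else 0 := rfl
      rw [hδ]
      by_cases hxy : σ x = σ y
      · rw [if_pos hxy, mul_one, mul_one]; ring
      · rw [if_neg hxy, mul_zero, mul_zero, Real.exp_zero, add_zero]
  · rw [Finset.prod_image (fun a _ b _ hab => ?_)]
    swap
    · rw [Sym2.eq_iff] at hab
      rcases hab with ⟨h1, _⟩ | ⟨_, h2⟩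
      · exact Option.some_injective V h1
      · exact absurd h2 (by simp)
    refine Finset.prod_congr rfl fun v _ => ?_
    have hc : cC E J h s(some v, none) = Real.exp (h v) - 1 := rfl
    have hδ : edgeDelta (hatS σ) s(some v, none)
        = if σ v = 0 then 1 else 0 := rfl
    rw [hc, hδ]
    by_cases hv : σ v = 0
    · rw [if_pos hv, mul_one, mul_one]; ring
    · rw [if_neg hv, mul_zero, mul_zero, Real.exp_zero, add_zero]

lemma expansion (f : Fin q → ℂ) (M : V → ℕ) :
    ∑ σ : V → Fin q, (pottsWeight q E J h σ : ℂ) * ∏ v : V, f (σ v) ^ M v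
      = ∑ A : Finset (Sym2 (Option V)),
          ((∏ e ∈ A, cC E J h e : ℝ) : ℂ) * ZAc q f A M := by
  classical
  have step : ∀ σ : V → Fin q, (pottsWeight q E J h σ : ℂ)
      = ∑ A ∈ (GED E).powerset,
          ((∏ e ∈ A, cC E J h e : ℝ) : ℂ) * ((∏ e ∈ A, edgeDelta (hatS σ) e : ℝ) : ℂ) := by
    intro σ
    rw [weight_eq σ]
    have hco : ∀ e ∈ GED E, (1 : ℝ) + cC E J h e * edgeDelta (hatS σ) e
        = cC E J h e * edgeDelta (hatS σ) e + 1 := fun _ _ => by ring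
    rw [Finset.prod_congr rfl hco, Finset.prod_add]
    push_cast
    refine Finset.sum_congr rfl fun A hA => ?_
    rw [Finset.prod_const_one, mul_one, Finset.prod_mul_distrib]
  have step2 : ∑ σ : V → Fin q, (pottsWeight q E J h σ : ℂ) * ∏ v : V, f (σ v) ^ M v
      = ∑ A ∈ (GED E).powerset, ((∏ e ∈ A, cC E J h e : ℝ) : ℂ) * ZAc q f A M := by
    calc ∑ σ : V → Fin q, (pottsWeight q E J h σ : ℂ) * ∏ v : V, f (σ v) ^ M v
        = ∑ σ : V → Fin q, ∑ A ∈ (GED E).powerset,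
            ((∏ e ∈ A, cC E J h e : ℝ) : ℂ) *
              (((∏ e ∈ A, edgeDelta (hatS σ) e : ℝ) : ℂ) * ∏ v : V, f (σ v) ^ M v) := by
          refine Finset.sum_congr rfl fun σ _ => ?_
          rw [step σ, Finset.sum_mul]
          exact Finset.sum_congr rfl fun A _ => by ring
      _ = ∑ A ∈ (GED E).powerset, ∑ σ : V → Fin q,
            ((∏ e ∈ A, cC E J h e : ℝ) : ℂ) *
              (((∏ e ∈ A, edgeDelta (hatS σ) e : ℝ) : ℂ) * ∏ v : V, f (σ v) ^ M v) :=
          Finset.sum_comm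
      _ = ∑ A ∈ (GED E).powerset, ((∏ e ∈ A, cC E J h e : ℝ) : ℂ) * ZAc q f A M := by
          refine Finset.sum_congr rfl fun A _ => ?_
          rw [ZAc, Finset.mul_sum]
  rw [step2]
  refine Finset.sum_subset (Finset.subset_univ _) fun A _ hA => ?_
  obtain ⟨e, heA, heG⟩ := Finset.not_subset.mp (fun hsub => hA (Finset.mem_powerset.mpr hsub))
  rw [Finset.prod_eq_zero heA (cC_eq_zero heG)]
  simp

end Expansion

section Assembly

variable {q : ℕ} [NeZero q] {f : Fin q → ℂ}
variable {E : Finset (Sym2 V)} {J : Sym2 V → ℝ} {h : V → ℝ}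

/-- Indicator multiplicities of a finset of vertices. -/
def indR (R : Finset V) : V → ℕ := fun v => if v ∈ R then 1 else 0

lemma prod_indR (f : Fin q → ℂ) (σ : V → Fin q) (R : Finset V) :
    ∏ v : V, f (σ v) ^ indR R v = ∏ v ∈ R, f (σ v) := by
  rw [← Finset.prod_subset (Finset.subset_univ R)
    (fun v _ hv => by simp [indR, hv])]
  exact Finset.prod_congr rfl fun v hv => by simp [indR, hv]

lemma prod_indRS (f : Fin q → ℂ) (σ : V → Fin q) (R S : Finset V) :
    ∏ v : V, f (σ v) ^ (indR R v + indR S v)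
      = (∏ v ∈ R, f (σ v)) * ∏ v ∈ S, f (σ v) := by
  simp only [pow_add, Finset.prod_mul_distrib, prod_indR]

lemma sum_weight_eq (hf : memF0 q f) (M : V → ℕ) :
    ∑ σ : V → Fin q, (pottsWeight q E J h σ : ℂ) * ∏ v : V, f (σ v) ^ M v
      = ((∑ A : Finset (Sym2 (Option V)), (∏ e ∈ A, cC E J h e) * ZAr q f A M : ℝ) : ℂ) := by
  rw [expansion f M]
  push_cast
  exact Finset.sum_congr rfl fun A _ => by rw [ZAc_eq_ZAr hf]

lemma pottsZ_pos : 0 < pottsZ q E J h := by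
  have : Nonempty (V → Fin q) := ⟨fun _ => ⟨0, Nat.pos_of_ne_zero (NeZero.ne q)⟩⟩
  exact Finset.sum_pos (fun σ _ => Real.exp_pos _) Finset.univ_nonempty

lemma pottsZ_expand (hf : memF0 q f) :
    pottsZ q E J h
      = ∑ A : Finset (Sym2 (Option V)), (∏ e ∈ A, cC E J h e) * ZAr q f A (fun _ => 0) := by
  have key := sum_weight_eq (E := E) (J := J) (h := h) hf (fun _ => 0)
  simp only [pow_zero, Finset.prod_const_one, mul_one] at key
  rw [pottsZ]
  exact_mod_cast key

lemma pottsMean_re (hf : memF0 q f) (R : Finset V) :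
    (pottsMean q E J h f R).re
      = (∑ A : Finset (Sym2 (Option V)), (∏ e ∈ A, cC E J h e) * ZAr q f A (indR R))
          / pottsZ q E J h := by
  have key : pottsMean q E J h f R
      = (((∑ A : Finset (Sym2 (Option V)), (∏ e ∈ A, cC E J h e) * ZAr q f A (indR R))
          / pottsZ q E J h : ℝ) : ℂ) := by
    rw [pottsMean]
    have hstep : ∀ σ : V → Fin q, (pottsPMF q E J h σ : ℂ) * ∏ v ∈ R, f (σ v)
        = (pottsZ q E J h : ℂ)⁻¹ *
            ((pottsWeight q E J h σ : ℂ) * ∏ v : V, f (σ v) ^ indR R v) := by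
      intro σ
      rw [pottsPMF, prod_indR]
      push_cast
      ring
    rw [Finset.sum_congr rfl (fun σ _ => hstep σ), ← Finset.mul_sum, sum_weight_eq hf]
    push_cast
    ring
  rw [key, Complex.ofReal_re]

lemma pottsMean2_re (hf : memF0 q f) (R S : Finset V) :
    (pottsMean2 q E J h f f R S).re
      = (∑ A : Finset (Sym2 (Option V)), (∏ e ∈ A, cC E J h e) *
            ZAr q f A (fun v => indR R v + indR S v))
          / pottsZ q E J h := by
  have key : pottsMean2 q E J h f f R S
      = (((∑ A : Finset (Sym2 (Option V)), (∏ e ∈ A, cC E J h e) *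
            ZAr q f A (fun v => indR R v + indR S v))
          / pottsZ q E J h : ℝ) : ℂ) := by
    rw [pottsMean2]
    have hstep : ∀ σ : V → Fin q, (pottsPMF q E J h σ : ℂ) *
          ((∏ v ∈ R, f (σ v)) * ∏ v ∈ S, f (σ v))
        = (pottsZ q E J h : ℂ)⁻¹ *
            ((pottsWeight q E J h σ : ℂ) * ∏ v : V, f (σ v) ^ (indR R v + indR S v)) := by
      intro σ
      rw [pottsPMF, prod_indRS]
      push_cast
      ring
    rw [Finset.sum_congr rfl (fun σ _ => hstep σ), ← Finset.mul_sum, sum_weight_eq hf]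
    push_cast
    ring
  rw [key, Complex.ofReal_re]

lemma T_ineq (hf : memF0 q f) (hJ : ∀ e ∈ E, 0 ≤ J e) (hh : ∀ v, 0 ≤ h v) (R S : Finset V) :
    (∑ A : Finset (Sym2 (Option V)), (∏ e ∈ A, cC E J h e) * ZAr q f A (indR R)) *
      (∑ A : Finset (Sym2 (Option V)), (∏ e ∈ A, cC E J h e) * ZAr q f A (indR S))
    ≤ (∑ A : Finset (Sym2 (Option V)), (∏ e ∈ A, cC E J h e) * ZAr q f A (fun _ => 0)) *
      (∑ A : Finset (Sym2 (Option V)), (∏ e ∈ A, cC E J h e) *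
        ZAr q f A (fun v => indR R v + indR S v)) := by
  classical
  set μ : Finset (Sym2 (Option V)) → ℝ :=
    fun A => (∏ e ∈ A, cC E J h e) * ZAr q f A (fun _ => 0) with hμdef
  set gR : Finset (Sym2 (Option V)) → ℝ :=
    fun A => ZAr q f A (indR R) / ZAr q f A (fun _ => 0) with hgRdef
  set gS : Finset (Sym2 (Option V)) → ℝ :=
    fun A => ZAr q f A (indR S) / ZAr q f A (fun _ => 0) with hgSdef
  have hc : ∀ A : Finset (Sym2 (Option V)), 0 ≤ ∏ e ∈ A, cC E J h e :=
    fun A => Finset.prod_nonneg fun e _ => cC_nonneg hJ hh e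
  have hμ0 : 0 ≤ μ := fun A => mul_nonneg (hc A) (ZAr_nonneg hf _ _)
  have hgR0 : 0 ≤ gR := fun A => div_nonneg (ZAr_nonneg hf _ _) (ZAr_zero_pos _).le
  have hgS0 : 0 ≤ gS := fun A => div_nonneg (ZAr_nonneg hf _ _) (ZAr_zero_pos _).le
  have hgRmono : Monotone gR := by
    intro A B hAB
    rw [hgRdef]
    dsimp only
    rw [div_le_div_iff₀ (ZAr_zero_pos _) (ZAr_zero_pos _)]
    exact ZAr_mono hf hAB _
  have hgSmono : Monotone gS := by
    intro A B hAB
    rw [hgSdef]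
    dsimp only
    rw [div_le_div_iff₀ (ZAr_zero_pos _) (ZAr_zero_pos _)]
    exact ZAr_mono hf hAB _
  have hμsup : ∀ A B : Finset (Sym2 (Option V)), μ A * μ B ≤ μ (A ⊓ B) * μ (A ⊔ B) := by
    intro A B
    have h1 : (∏ e ∈ A, cC E J h e) * (∏ e ∈ B, cC E J h e)
        = (∏ e ∈ A ∩ B, cC E J h e) * (∏ e ∈ A ∪ B, cC E J h e) := by
      rw [mul_comm (∏ e ∈ A ∩ B, cC E J h e)]
      exact (Finset.prod_union_inter).symm
    have h2 := ZAr_zero_supermod f A B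
    calc μ A * μ B
        = ((∏ e ∈ A, cC E J h e) * (∏ e ∈ B, cC E J h e)) *
            (ZAr q f A (fun _ => 0) * ZAr q f B (fun _ => 0)) := by rw [hμdef]; ring
      _ = ((∏ e ∈ A ∩ B, cC E J h e) * (∏ e ∈ A ∪ B, cC E J h e)) *
            (ZAr q f A (fun _ => 0) * ZAr q f B (fun _ => 0)) := by rw [h1]
      _ ≤ ((∏ e ∈ A ∩ B, cC E J h e) * (∏ e ∈ A ∪ B, cC E J h e)) *
            (ZAr q f (A ∩ B) (fun _ => 0) * ZAr q f (A ∪ B) (fun _ => 0)) :=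
          mul_le_mul_of_nonneg_left h2 (mul_nonneg (hc _) (hc _))
      _ = μ (A ⊓ B) * μ (A ⊔ B) := by
          rw [hμdef]
          simp only [Finset.inf_eq_inter, Finset.sup_eq_union]
          ring
  have main := fkg (μ := μ) (f := gR) (g := gS) hμ0 hgR0 hgS0 hgRmono hgSmono hμsup
  have eR : ∀ A : Finset (Sym2 (Option V)),
      μ A * gR A = (∏ e ∈ A, cC E J h e) * ZAr q f A (indR R) := by
    intro A
    rw [hμdef, hgRdef]
    dsimp only
    rw [mul_assoc, mul_comm (ZAr q f A (fun _ => 0)), div_mul_cancel₀ _ (ZAr_zero_pos A).ne']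
  have eS : ∀ A : Finset (Sym2 (Option V)),
      μ A * gS A = (∏ e ∈ A, cC E J h e) * ZAr q f A (indR S) := by
    intro A
    rw [hμdef, hgSdef]
    dsimp only
    rw [mul_assoc, mul_comm (ZAr q f A (fun _ => 0)), div_mul_cancel₀ _ (ZAr_zero_pos A).ne']
  have eRS : ∀ A : Finset (Sym2 (Option V)),
      μ A * (gR A * gS A) ≤ (∏ e ∈ A, cC E J h e) *
        ZAr q f A (fun v => indR R v + indR S v) := by
    intro A
    have hval : μ A * (gR A * gS A)
        = (∏ e ∈ A, cC E J h e) *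
            (ZAr q f A (indR R) * ZAr q f A (indR S) / ZAr q f A (fun _ => 0)) := by
      have hz : (ZAr q f A fun _ => 0) ≠ 0 := (ZAr_zero_pos A).ne'
      rw [hμdef, hgRdef, hgSdef]
      dsimp only
      field_simp
    rw [hval]
    refine mul_le_mul_of_nonneg_left ?_ (hc A)
    rw [div_le_iff₀ (ZAr_zero_pos A)]
    exact ZAr_supermul hf A (indR R) (indR S)
  calc (∑ A : Finset (Sym2 (Option V)), (∏ e ∈ A, cC E J h e) * ZAr q f A (indR R)) *
        (∑ A : Finset (Sym2 (Option V)), (∏ e ∈ A, cC E J h e) * ZAr q f A (indR S))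
      = (∑ A, μ A * gR A) * ∑ A, μ A * gS A := by
        rw [Finset.sum_congr rfl fun A _ => (eR A).symm,
          Finset.sum_congr rfl fun A _ => (eS A).symm]
    _ ≤ (∑ A, μ A) * ∑ A, μ A * (gR A * gS A) := main
    _ ≤ (∑ A, μ A) * ∑ A : Finset (Sym2 (Option V)),
          (∏ e ∈ A, cC E J h e) * ZAr q f A (fun v => indR R v + indR S v) := by
        refine mul_le_mul_of_nonneg_left (Finset.sum_le_sum fun A _ => eRS A)
          (Finset.sum_nonneg fun A _ => hμ0 A)
    _ = _ := rfl

end Assembly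

end PottsAux

/-- GKS-type inequality: for `f ∈ F_q^0` and `R, S ⊆ V`,
`⟨f(σ)^R f(σ)^S⟩ ≥ ⟨f(σ)^R⟩ ⟨f(σ)^S⟩`. -/
theorem pottsMean_GKS
    (q : ℕ) [NeZero q] (hq : 2 ≤ q)
    (E : Finset (Sym2 V)) (hE : ∀ e ∈ E, ¬ e.IsDiag)
    (J : Sym2 V → ℝ) (hJ : ∀ e ∈ E, 0 ≤ J e)
    (h : V → ℝ) (hh : ∀ v : V, 0 ≤ h v)
    (f : Fin q → ℂ) (hf : memF0 q f) (R S : Finset V) :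
    (pottsMean q E J h f R).re * (pottsMean q E J h f S).re ≤
      (pottsMean2 q E J h f f R S).re := by
  classical
  have hZ : 0 < pottsZ q E J h := pottsZ_pos
  rw [pottsMean_re hf R, pottsMean_re hf S, pottsMean2_re hf R S]
  rw [div_mul_div_comm, div_le_div_iff₀ (by positivity) hZ]
  have hT := T_ineq hf hJ hh R S
  have hZT := pottsZ_expand (E := E) (J := J) (h := h) hf
  calc (∑ A : Finset (Sym2 (Option V)), (∏ e ∈ A, cC E J h e) * ZAr q f A (indR R)) *
        (∑ A : Finset (Sym2 (Option V)), (∏ e ∈ A, cC E J h e) * ZAr q f A (indR S)) *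
        pottsZ q E J h
      ≤ ((∑ A : Finset (Sym2 (Option V)), (∏ e ∈ A, cC E J h e) * ZAr q f A (fun _ => 0)) *
          (∑ A : Finset (Sym2 (Option V)), (∏ e ∈ A, cC E J h e) *
            ZAr q f A (fun v => indR R v + indR S v))) * pottsZ q E J h :=
        mul_le_mul_of_nonneg_right hT hZ.le
    _ = _ := by rw [← hZT]; ring
end
end

section
/- Let q ≥ 2 be an integer. The function f : Q → ℂ given by f(x) = (q−1)/2 − x belongs to F_q^0; that is, for all integers m,n ≥ 0, E(f(X)^m) is real and nonnegative, E(f(X)^{m+n}) ≥ E(f(X)^m)·E(f(X)^n), and f(0) = max{|f(x)| : x ∈ Q}. -/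
open Finset

noncomputable section

variable {V : Type*} [Fintype V] [DecidableEq V]

section aux

variable (q : ℕ)

private noncomputable def aF (x : Fin q) : ℝ := ((q : ℝ) - 1) / 2 - (x : ℕ)

private lemma aF_rev (x : Fin q) : aF q (Fin.rev x) = - aF q x := by
  unfold aF
  rw [Fin.val_rev]
  have hx : (x : ℕ) + 1 ≤ q := x.isLt
  rw [Nat.cast_sub hx]
  push_cast
  ring

private lemma sum_odd_zero {m : ℕ} (hm : Odd m) : (∑ x : Fin q, aF q x ^ m) = 0 := by
  have h := Equiv.sum_comp (Fin.revPerm (n := q)) (fun x => aF q x ^ m)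
  simp only [Fin.revPerm_apply, aF_rev, hm.neg_pow] at h
  have : -(∑ x : Fin q, aF q x ^ m) = ∑ x : Fin q, aF q x ^ m := by
    rw [← Finset.sum_neg_distrib]; exact h
  linarith

private lemma sum_nonneg' (m : ℕ) : 0 ≤ ∑ x : Fin q, aF q x ^ m := by
  rcases Nat.even_or_odd m with hm | hm
  · exact Finset.sum_nonneg fun x _ => hm.pow_nonneg _
  · rw [sum_odd_zero q hm]

private lemma monovary_pow {m n : ℕ} (hm : Even m) (hn : Even n) :
    Monovary (fun x => aF q x ^ m) (fun x => aF q x ^ n) := by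
  intro i j hij
  rcases Nat.eq_zero_or_pos n with rfl | hn0
  · simp at hij
  have h1 : |aF q i| ^ n < |aF q j| ^ n := by rwa [hn.pow_abs, hn.pow_abs]
  have h2 : |aF q i| < |aF q j| :=
    (pow_lt_pow_iff_left₀ (abs_nonneg _) (abs_nonneg _) hn0.ne').mp h1
  calc aF q i ^ m = |aF q i| ^ m := (hm.pow_abs _).symm
    _ ≤ |aF q j| ^ m := pow_le_pow_left₀ (abs_nonneg _) h2.le m
    _ = aF q j ^ m := hm.pow_abs _

private lemma cheb (m n : ℕ) :
    (∑ x : Fin q, aF q x ^ m) * (∑ x : Fin q, aF q x ^ n)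
      ≤ q * ∑ x : Fin q, aF q x ^ (m + n) := by
  rcases Nat.even_or_odd m with hm | hm
  · rcases Nat.even_or_odd n with hn | hn
    · have := (monovary_pow q hm hn).sum_mul_sum_le_card_mul_sum
      simp only [Finset.card_univ, Fintype.card_fin, nsmul_eq_mul] at this
      calc (∑ x : Fin q, aF q x ^ m) * (∑ x : Fin q, aF q x ^ n)
          ≤ q * ∑ x : Fin q, aF q x ^ m * aF q x ^ n := this
        _ = q * ∑ x : Fin q, aF q x ^ (m + n) := by
            congr 1; exact Finset.sum_congr rfl fun x _ => (pow_add _ _ _).symm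
    · rw [sum_odd_zero q hn, mul_zero]
      exact mul_nonneg (Nat.cast_nonneg q) (sum_nonneg' q _)
  · rw [sum_odd_zero q hm, zero_mul]
    exact mul_nonneg (Nat.cast_nonneg q) (sum_nonneg' q _)

end aux

/-- The function `f(x) = (q-1)/2 - x` belongs to `F_q^0`. -/
theorem linear_mem_F0 (q : ℕ) [NeZero q] (hq : 2 ≤ q) :
    memF0 q (fun x : Fin q => ((q : ℂ) - 1) / 2 - (x : ℕ)) := by
  have hq0 : (0 : ℝ) < q := by positivity
  set f : Fin q → ℂ := fun x => ((q : ℂ) - 1) / 2 - (x : ℕ) with hf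
  have hfx : ∀ x : Fin q, f x = ((aF q x : ℝ) : ℂ) := by
    intro x
    show ((q : ℂ) - 1) / 2 - (x : ℕ) = _
    unfold aF
    push_cast
    ring
  have hpm : ∀ m : ℕ, powerMean q f m = (((∑ x : Fin q, aF q x ^ m) / q : ℝ) : ℂ) := by
    intro m
    unfold powerMean
    have hsum : (∑ x : Fin q, f x ^ m) = (((∑ x : Fin q, aF q x ^ m) : ℝ) : ℂ) := by
      push_cast
      exact Finset.sum_congr rfl fun x _ => by rw [hfx x]
    rw [hsum]
    push_cast
    ring
  constructor
  · constructor
    · intro m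
      rw [hpm m]
      exact ⟨Complex.ofReal_im _, by
        rw [Complex.ofReal_re]
        exact div_nonneg (sum_nonneg' q m) hq0.le⟩
    · intro m n
      rw [hpm m, hpm n, hpm (m + n)]
      simp only [Complex.ofReal_re]
      rw [div_mul_div_comm, div_le_div_iff₀ (by positivity) hq0]
      calc (∑ x : Fin q, aF q x ^ m) * (∑ x : Fin q, aF q x ^ n) * q
          ≤ (q * ∑ x : Fin q, aF q x ^ (m + n)) * q := by
            exact mul_le_mul_of_nonneg_right (cheb q m n) hq0.le
        _ = (∑ x : Fin q, aF q x ^ (m + n)) * (q * q) := by ring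
  · have h0 : f 0 = (((q : ℝ) - 1) / 2 : ℝ) := by
      rw [hfx]; norm_num [aF]
    have hge : (0 : ℝ) ≤ ((q : ℝ) - 1) / 2 := by
      have : (2 : ℝ) ≤ q := by exact_mod_cast hq
      linarith
    constructor
    · rw [h0, Complex.norm_real, Real.norm_eq_abs, abs_of_nonneg hge]
    · intro x
      rw [hfx x, h0, Complex.norm_real, Complex.norm_real, Real.norm_eq_abs, Real.norm_eq_abs, abs_of_nonneg hge]
      have hx : (x : ℝ) ≤ (q : ℝ) - 1 := by
        have : (x : ℕ) + 1 ≤ q := x.isLt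
        have := (Nat.cast_le (α := ℝ)).mpr this
        push_cast at this; linarith
      have hx0 : (0 : ℝ) ≤ (x : ℕ) := Nat.cast_nonneg _
      rw [abs_le]
      unfold aF
      constructor <;> linarith
end
end
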